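/- arXiv:2105.05879 — 7 statements merged into one kernel-verified Lean document; each statement's English description precedes it below -/
import Mathlib

section
/- Let d ≥ 1, t ∈ ℕ, and let u_1, …, u_L be unit vectors in ℝ^d. Then the following are equivalent: (b) for every k ∈ {1, …, t} and every x ∈ ℝ^d, (1/L)·∑_{ℓ=1}^L ⟨x, u_ℓ⟩^{2k} = c_{d,k}·‖x‖^{2k}; (c) for every k ∈ {1, …, t}, (1/L²)·∑_{ℓ=1}^L ∑_{ℓ'=1}^L ⟨u_ℓ, u_{ℓ'}⟩^{2k} = c_{d,k}. -/
set_option linter.unusedSectionVars false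
set_option linter.unusedVariables false

open Finset

section Pairings

variable {d : ℕ} {ι : Type} [Fintype ι] [DecidableEq ι]

/-- Set of fixed-point-free involutions compatible with the index function `i`. -/
def pairingSet (i : ι → Fin d) : Finset (ι → ι) :=
  Finset.univ.filter fun P => (∀ x, P (P x) = x) ∧ (∀ x, P x ≠ x) ∧ (∀ x, i (P x) = i x)

def mcount (i : ι → Fin d) : ℕ := (pairingSet i).card

lemma mem_pairingSet {i : ι → Fin d} {P : ι → ι} :
    P ∈ pairingSet i ↔ (∀ x, P (P x) = x) ∧ (∀ x, P x ≠ x) ∧ (∀ x, i (P x) = i x) := by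
  simp [pairingSet]

lemma mcount_comp {ι' : Type} [Fintype ι'] [DecidableEq ι'] (π : ι' ≃ ι) (i : ι → Fin d) :
    mcount (i ∘ π) = mcount i := by
  unfold mcount
  apply Finset.card_nbij' (fun P => π ∘ P ∘ π.symm) (fun P => π.symm ∘ P ∘ π)
  · intro P hP
    rw [Finset.mem_coe, mem_pairingSet] at hP ⊢
    obtain ⟨h1, h2, h3⟩ := hP
    refine ⟨fun x => ?_, fun x h => ?_, fun x => ?_⟩
    · simp [h1]
    · simp only [Function.comp_apply] at h
      have := congrArg π.symm h
      simp at this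
      exact h2 _ this
    · have := h3 (π.symm x)
      simpa using this
  · intro P hP
    rw [Finset.mem_coe, mem_pairingSet] at hP ⊢
    obtain ⟨h1, h2, h3⟩ := hP
    refine ⟨fun x => ?_, fun x h => ?_, fun x => ?_⟩
    · simp [h1]
    · simp only [Function.comp_apply] at h
      have := congrArg π h
      simp at this
      exact h2 _ this
    · have := h3 (π x)
      simpa using this
  · intro P _; funext x; simp
  · intro P _; funext x; simp





variable (a b : ι)

/-- Extend a function on `{x // x ≠ a ∧ x ≠ b}` to `ι` with values `c` at `a` and `c'` at `b`. -/
def glue (c c' : Fin d) (i' : {x : ι // x ≠ a ∧ x ≠ b} → Fin d) : ι → Fin d :=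
  fun x => if h : x = a then c else if h' : x = b then c' else i' ⟨x, h, h'⟩

variable {a b}

lemma glue_fst (hab : a ≠ b) (c c' : Fin d) (i' : {x : ι // x ≠ a ∧ x ≠ b} → Fin d) :
    glue a b c c' i' a = c := by simp [glue]

lemma glue_snd (hab : a ≠ b) (c c' : Fin d) (i' : {x : ι // x ≠ a ∧ x ≠ b} → Fin d) :
    glue a b c c' i' b = c' := by simp [glue, hab.symm]

lemma glue_other (c c' : Fin d) (i' : {x : ι // x ≠ a ∧ x ≠ b} → Fin d) {x : ι}
    (hx : x ≠ a) (hx' : x ≠ b) : glue a b c c' i' x = i' ⟨x, hx, hx'⟩ := by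
  simp [glue, hx, hx']

lemma restr_glue (hab : a ≠ b) (c c' : Fin d) (i' : {x : ι // x ≠ a ∧ x ≠ b} → Fin d) :
    (fun x : {x : ι // x ≠ a ∧ x ≠ b} => glue a b c c' i' x.1) = i' := by
  funext x
  rw [glue_other c c' i' x.2.1 x.2.2]

/-- Splitting a sum over all functions `ι → Fin d` according to values at `a`, `b`. -/
lemma sum_glue_split {M : Type} [AddCommMonoid M] (hab : a ≠ b) (F : (ι → Fin d) → M) :
    ∑ i : ι → Fin d, F i = ∑ c : Fin d, ∑ c' : Fin d,
      ∑ i' : {x : ι // x ≠ a ∧ x ≠ b} → Fin d, F (glue a b c c' i') := by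
  have key : ∀ p : Fin d × Fin d × ({x : ι // x ≠ a ∧ x ≠ b} → Fin d),
      F (glue a b p.1 p.2.1 p.2.2) = F (glue a b p.1 p.2.1 p.2.2) := fun _ => rfl
  have hbij : Function.Bijective
      (fun p : Fin d × Fin d × ({x : ι // x ≠ a ∧ x ≠ b} → Fin d) =>
        glue a b p.1 p.2.1 p.2.2) := by
    constructor
    · rintro ⟨c, c', i'⟩ ⟨e, e', j'⟩ h
      have h1 := congrFun h a
      have h2 := congrFun h b
      dsimp only at h1 h2
      rw [glue_fst hab, glue_fst hab] at h1
      rw [glue_snd hab, glue_snd hab] at h2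
      subst h1; subst h2
      have h3 : i' = j' := by
        funext x
        have := congrFun h x.1
        dsimp only at this
        rwa [glue_other _ _ _ x.2.1 x.2.2, glue_other _ _ _ x.2.1 x.2.2] at this
      rw [h3]
    · intro i
      refine ⟨⟨i a, i b, fun x => i x.1⟩, ?_⟩
      funext x
      dsimp only
      by_cases hx : x = a
      · subst hx; rw [glue_fst hab]
      · by_cases hx' : x = b
        · subst hx'; rw [glue_snd hab]
        · rw [glue_other _ _ _ hx hx']
  rw [← Fintype.sum_bijective _ hbij _ F (fun _ => rfl), Fintype.sum_prod_type]
  congr 1; funext c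
  rw [Fintype.sum_prod_type]

lemma prod_split {M : Type} [CommMonoid M] (hab : a ≠ b) (f : ι → M) :
    ∏ x : ι, f x = f a * f b * ∏ x : {x : ι // x ≠ a ∧ x ≠ b}, f x.1 := by
  have h1 : ∏ x : {x : ι // x ≠ a ∧ x ≠ b}, f x.1
      = ∏ x ∈ (Finset.univ.erase a).erase b, f x := by
    rw [Finset.prod_subtype ((Finset.univ.erase a).erase b) (fun x => ?_) f]
    simp only [Finset.mem_erase, Finset.mem_univ, and_true]
    tauto
  rw [← Finset.mul_prod_erase _ f (Finset.mem_univ a),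
    ← Finset.mul_prod_erase _ f (by simp [hab.symm] : b ∈ Finset.univ.erase a), h1, mul_assoc]

lemma card_sub (hab : a ≠ b) :
    Fintype.card {x : ι // x ≠ a ∧ x ≠ b} = Fintype.card ι - 2 := by
  rw [Fintype.card_subtype]
  have : Finset.univ.filter (fun x : ι => x ≠ a ∧ x ≠ b) = (Finset.univ.erase a).erase b := by
    ext x; simp only [Finset.mem_filter, Finset.mem_erase, Finset.mem_univ, and_true, true_and]
    tauto
  rw [this, Finset.card_erase_of_mem (by simp [hab.symm]),
    Finset.card_erase_of_mem (Finset.mem_univ a), Finset.card_univ]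
  omega





/-- auxiliary: the extension of a pairing on the complement of `{a,b}` by the pair `(a,b)`. -/
def pext (a b : ι) (P' : {x : ι // x ≠ a ∧ x ≠ b} → {x : ι // x ≠ a ∧ x ≠ b}) : ι → ι :=
  fun x => if h : x = a then b else if h' : x = b then a else (P' ⟨x, h, h'⟩).1

/-- auxiliary: restriction of a pairing with `P a = b` to the complement of `{a, b}` -/
def pres (a b : ι) (P : ι → ι) :
    {x : ι // x ≠ a ∧ x ≠ b} → {x : ι // x ≠ a ∧ x ≠ b} :=
  fun x => if h : P x.1 ≠ a ∧ P x.1 ≠ b then ⟨P x.1, h⟩ else x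

-- the key recursion, fiber count
lemma card_fiber (i : ι → Fin d) {a b : ι} (hab : b ≠ a) (hib : i b = i a) :
    ((pairingSet i).filter fun P => P a = b).card
      = mcount (fun x : {x : ι // x ≠ a ∧ x ≠ b} => i x.1) := by
  apply Finset.card_nbij' (pres a b) (pext a b)
  · -- restriction belongs
    rintro P hP
    simp only [Finset.mem_coe, Finset.mem_filter, mem_pairingSet] at hP
    obtain ⟨⟨h1, h2, h3⟩, hPa⟩ := hP
    have hPb : P b = a := by rw [← hPa, h1]
    have hmem : ∀ x : {x : ι // x ≠ a ∧ x ≠ b}, P x.1 ≠ a ∧ P x.1 ≠ b := by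
      rintro ⟨x, hx1, hx2⟩
      constructor
      · intro hc
        have : P (P x) = P a := by rw [hc]
        rw [h1, hPa] at this; exact hx2 this
      · intro hc
        have : P (P x) = P b := by rw [hc]
        rw [h1, hPb] at this; exact hx1 this
    rw [Finset.mem_coe, mem_pairingSet]
    refine ⟨fun x => ?_, fun x hx => ?_, fun x => ?_⟩
    · unfold pres
      rw [dif_pos (hmem x), dif_pos (hmem ⟨P x.1, hmem x⟩)]
      exact Subtype.ext (h1 x.1)
    · unfold pres at hx
      rw [dif_pos (hmem x)] at hx
      exact h2 x.1 (congrArg Subtype.val hx)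
    · unfold pres
      rw [dif_pos (hmem x)]
      exact h3 x.1
  · -- extension belongs
    rintro P' hP'
    rw [Finset.mem_coe, mem_pairingSet] at hP'
    obtain ⟨h1, h2, h3⟩ := hP'
    simp only [Finset.mem_coe, Finset.mem_filter, mem_pairingSet]
    have heb : ∀ (x : ι) (h : x ≠ a) (h' : x ≠ b), pext a b P' x = (P' ⟨x, h, h'⟩).1 := by
      intro x h h'; unfold pext; rw [dif_neg h, dif_neg h']
    have hea : pext a b P' a = b := by unfold pext; rw [dif_pos rfl]
    have heb' : pext a b P' b = a := by
      unfold pext; rw [dif_neg hab, dif_pos rfl]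
    refine ⟨⟨fun x => ?_, fun x hx => ?_, fun x => ?_⟩, hea⟩
    · by_cases hx : x = a
      · subst hx; rw [hea, heb', ]
      · by_cases hx' : x = b
        · subst hx'; rw [heb', hea]
        · rw [heb x hx hx', heb _ (P' ⟨x, hx, hx'⟩).2.1 (P' ⟨x, hx, hx'⟩).2.2]
          have := congrArg Subtype.val (h1 ⟨x, hx, hx'⟩)
          simpa using this
    · by_cases hxa : x = a
      · subst hxa; rw [hea] at hx; exact hab hx
      · by_cases hxb : x = b
        · subst hxb; rw [heb'] at hx; exact hab hx.symm
        · rw [heb x hxa hxb] at hx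
          exact h2 ⟨x, hxa, hxb⟩ (Subtype.ext hx)
    · by_cases hxa : x = a
      · subst hxa; rw [hea]; exact hib
      · by_cases hxb : x = b
        · subst hxb; rw [heb']; exact hib.symm
        · rw [heb x hxa hxb]; exact h3 ⟨x, hxa, hxb⟩
  · -- left inverse
    intro P hP
    simp only [Finset.mem_coe, Finset.mem_filter, mem_pairingSet] at hP
    obtain ⟨⟨h1, h2, h3⟩, hPa⟩ := hP
    have hPb : P b = a := by rw [← hPa, h1]
    funext x
    unfold pext
    by_cases hx : x = a
    · subst hx; rw [dif_pos rfl, hPa]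
    · by_cases hx' : x = b
      · subst hx'; rw [dif_neg hx, dif_pos rfl, hPb]
      · rw [dif_neg hx, dif_neg hx']
        unfold pres
        have hmem : P x ≠ a ∧ P x ≠ b := by
          constructor
          · intro hc
            have : P (P x) = P a := by rw [hc]
            rw [h1, hPa] at this; exact hx' this
          · intro hc
            have : P (P x) = P b := by rw [hc]
            rw [h1, hPb] at this; exact hx this
        rw [dif_pos hmem]
  · -- right inverse
    intro P' hP'
    rw [Finset.mem_coe, mem_pairingSet] at hP'
    obtain ⟨h1, h2, h3⟩ := hP'
    funext x
    unfold pres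
    have : pext a b P' x.1 = (P' x).1 := by
      unfold pext
      rw [dif_neg x.2.1, dif_neg x.2.2]
    rw [dif_pos (by rw [this]; exact (P' x).2)]
    exact Subtype.ext this

lemma mcount_rec (a : ι) (i : ι → Fin d) :
    mcount i = ∑ b ∈ Finset.univ.erase a,
      if i b = i a then mcount (fun x : {x : ι // x ≠ a ∧ x ≠ b} => i x.1) else 0 := by
  unfold mcount
  rw [Finset.card_eq_sum_card_fiberwise (f := fun P => P a) (t := Finset.univ)
    (fun P _ => Finset.mem_univ _)]
  rw [← Finset.sum_erase_add _ _ (Finset.mem_univ a)]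
  have ha0 : ((pairingSet i).filter fun P => P a = a).card = 0 := by
    rw [Finset.card_eq_zero, Finset.filter_eq_empty_iff]
    intro P hP
    rw [mem_pairingSet] at hP
    exact hP.2.1 a
  rw [ha0, add_zero]
  apply Finset.sum_congr rfl
  intro b hb
  have hba : b ≠ a := (Finset.mem_erase.mp hb).1
  by_cases hib : i b = i a
  · rw [if_pos hib, card_fiber i hba hib]; rfl
  · rw [if_neg hib, Finset.card_eq_zero, Finset.filter_eq_empty_iff]
    intro P hP
    rw [mem_pairingSet] at hP
    intro hc
    exact hib (by rw [← hc]; exact hP.2.2 a)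


lemma sum_glue_diag {a b : ι} {M : Type} [AddCommMonoid M] (hab : a ≠ b)
    (F : (ι → Fin d) → M) (hF : ∀ i : ι → Fin d, i b ≠ i a → F i = 0) :
    ∑ i : ι → Fin d, F i
      = ∑ c : Fin d, ∑ i' : {x : ι // x ≠ a ∧ x ≠ b} → Fin d, F (glue a b c c i') := by
  rw [sum_glue_split hab F]
  apply Finset.sum_congr rfl
  intro c _
  rw [Finset.sum_comm]
  apply Finset.sum_congr rfl
  intro i' _
  apply Finset.sum_eq_single c
  · intro c' _ hc'
    apply hF
    rw [glue_fst hab, glue_snd hab]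
    exact hc'
  · intro h; exact absurd (Finset.mem_univ c) h

lemma prod_glue {a b : ι} (hab : a ≠ b) (c c' : Fin d)
    (i' : {x : ι // x ≠ a ∧ x ≠ b} → Fin d) (x : Fin d → ℝ) :
    ∏ j : ι, x (glue a b c c' i' j)
      = x c * x c' * ∏ j : {x : ι // x ≠ a ∧ x ≠ b}, x (i' j) := by
  rw [prod_split hab (fun j => x (glue a b c c' i' j)), glue_fst hab, glue_snd hab]
  congr 1
  apply Finset.prod_congr rfl
  intro j _
  rw [glue_other _ _ _ j.2.1 j.2.2]

/-- Lemma (A): `∑_i m(i) ∏_j x_{i_j} = (2k-1)!! ‖x‖^{2k}`. -/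
lemma lemA (d : ℕ) : ∀ (k : ℕ) (ι : Type) [Fintype ι] [DecidableEq ι],
    Fintype.card ι = 2 * k → ∀ x : Fin d → ℝ,
    ∑ i : ι → Fin d, (mcount i : ℝ) * ∏ j : ι, x (i j)
      = (∏ j ∈ Finset.range k, (2 * (j : ℝ) + 1)) * (∑ c, x c ^ 2) ^ k := by
  intro k
  induction k with
  | zero =>
    intro ι _ _ hcard x
    have hemp : IsEmpty ι := Fintype.card_eq_zero_iff.mp (by simpa using hcard)
    have h1 : ∀ i : ι → Fin d, mcount i = 1 := by
      intro i
      unfold mcount pairingSet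
      rw [Finset.filter_true_of_mem (fun P _ => ⟨fun x => hemp.elim x,
        fun x => hemp.elim x, fun x => hemp.elim x⟩), Finset.card_univ, Fintype.card_fun]
      simp [hcard]
    have h2 : Fintype.card (ι → Fin d) = 1 := by
      rw [Fintype.card_fun]; simp [hcard]
    simp only [h1, Nat.cast_one, one_mul, Finset.univ_eq_empty (α := ι), Finset.prod_empty,
      Finset.prod_range_zero, pow_zero, mul_one]
    rw [Finset.sum_const, Finset.card_univ, h2, one_smul]
  | succ k IH =>
    intro ι _ _ hcard x
    have hpos : 0 < Fintype.card ι := by omega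
    obtain ⟨a⟩ := Fintype.card_pos_iff.mp hpos
    have step1 : ∀ i : ι → Fin d, (mcount i : ℝ) * ∏ j : ι, x (i j)
        = ∑ b ∈ Finset.univ.erase a,
            (if i b = i a then
              (mcount (fun y : {y : ι // y ≠ a ∧ y ≠ b} => i y.1) : ℝ) * ∏ j : ι, x (i j)
            else 0) := by
      intro i
      rw [mcount_rec a i, Nat.cast_sum, Finset.sum_mul]
      refine Finset.sum_congr rfl fun b hb => ?_
      split_ifs with h <;> simp
    rw [Finset.sum_congr rfl fun i _ => step1 i, Finset.sum_comm]
    have step2 : ∀ b ∈ Finset.univ.erase a,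
        (∑ i : ι → Fin d,
          if i b = i a then
            (mcount (fun y : {y : ι // y ≠ a ∧ y ≠ b} => i y.1) : ℝ) * ∏ j : ι, x (i j)
          else 0)
        = (∑ c, x c ^ 2) *
            ((∏ j ∈ Finset.range k, (2 * (j : ℝ) + 1)) * (∑ c, x c ^ 2) ^ k) := by
      intro b hb
      have hab : a ≠ b := (Finset.mem_erase.mp hb).1.symm
      rw [sum_glue_diag hab _ (fun i hi => if_neg hi)]
      have inner : ∀ (c : Fin d) (i' : {y : ι // y ≠ a ∧ y ≠ b} → Fin d),
          (if glue a b c c i' b = glue a b c c i' a then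
            (mcount (fun y : {y : ι // y ≠ a ∧ y ≠ b} => glue a b c c i' y.1) : ℝ)
              * ∏ j : ι, x (glue a b c c i' j)
          else 0)
          = x c ^ 2 * ((mcount i' : ℝ) * ∏ j : {y : ι // y ≠ a ∧ y ≠ b}, x (i' j)) := by
        intro c i'
        rw [glue_fst hab, glue_snd hab, if_pos rfl, restr_glue hab, prod_glue hab]
        ring
      rw [Finset.sum_congr rfl fun c _ => Finset.sum_congr rfl fun i' _ => inner c i']
      have hsub : Fintype.card {y : ι // y ≠ a ∧ y ≠ b} = 2 * k := by
        rw [card_sub hab]; omega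
      rw [← Finset.sum_mul_sum, IH _ hsub x]
    rw [Finset.sum_congr rfl step2, Finset.sum_const]
    have hcarderase : (Finset.univ.erase a).card = 2 * k + 1 := by
      rw [Finset.card_erase_of_mem (Finset.mem_univ a), Finset.card_univ]; omega
    rw [hcarderase, Finset.prod_range_succ, nsmul_eq_mul]
    push_cast
    ring

/-- Lemma (B): contraction identity. -/
lemma lemB {a b : ι} (hab : a ≠ b) (i' : {x : ι // x ≠ a ∧ x ≠ b} → Fin d) :
    ∑ c : Fin d, mcount (glue a b c c i') = (d + (Fintype.card ι - 2)) * mcount i' := by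
  have hb : b ∈ Finset.univ.erase a := by simp [hab.symm]
  rw [Finset.sum_congr rfl fun c _ => mcount_rec a (glue a b c c i'), Finset.sum_comm]
  rw [← Finset.sum_erase_add _ _ hb]
  have hbterm : (∑ c : Fin d,
      if glue a b c c i' b = glue a b c c i' a then
        mcount (fun x : {x : ι // x ≠ a ∧ x ≠ b} => glue a b c c i' x.1) else 0)
      = d * mcount i' := by
    have : ∀ c : Fin d, (if glue a b c c i' b = glue a b c c i' a then
        mcount (fun x : {x : ι // x ≠ a ∧ x ≠ b} => glue a b c c i' x.1) else 0)
        = mcount i' := by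
      intro c
      rw [glue_fst hab, glue_snd hab, if_pos rfl, restr_glue hab]
    rw [Finset.sum_congr rfl fun c _ => this c, Finset.sum_const, Finset.card_univ,
      Fintype.card_fin, smul_eq_mul]
  have hrest : ∀ b' ∈ (Finset.univ.erase a).erase b,
      (∑ c : Fin d,
        if glue a b c c i' b' = glue a b c c i' a then
          mcount (fun x : {x : ι // x ≠ a ∧ x ≠ b'} => glue a b c c i' x.1) else 0)
      = mcount i' := by
    intro b' hb'
    have hb'b : b' ≠ b := (Finset.mem_erase.mp hb').1
    have hb'a : b' ≠ a := (Finset.mem_erase.mp (Finset.mem_erase.mp hb').2).1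
    have hval : ∀ c : Fin d, glue a b c c i' b' = i' ⟨b', hb'a, hb'b⟩ :=
      fun c => glue_other _ _ _ hb'a hb'b
    have step : ∀ c : Fin d,
        (if glue a b c c i' b' = glue a b c c i' a then
          mcount (fun x : {x : ι // x ≠ a ∧ x ≠ b'} => glue a b c c i' x.1) else 0)
        = (if i' ⟨b', hb'a, hb'b⟩ = c then
          mcount (fun x : {x : ι // x ≠ a ∧ x ≠ b'} => glue a b c c i' x.1) else 0) := by
      intro c
      rw [hval c, glue_fst hab]
    rw [Finset.sum_congr rfl fun c _ => step c, Finset.sum_ite_eq, if_pos (Finset.mem_univ _)]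
    -- now: mcount (restriction to {x ≠ a ∧ x ≠ b'} of glue with c := i' b') = mcount i'
    set v := i' ⟨b', hb'a, hb'b⟩ with hv
    have hswa : Equiv.swap b b' a = a := Equiv.swap_apply_of_ne_of_ne hab hb'a.symm
    have hπ : ∀ x : ι, (x ≠ a ∧ x ≠ b') ↔ (Equiv.swap b b' x ≠ a ∧ Equiv.swap b b' x ≠ b) := by
      intro x
      constructor
      · rintro ⟨h1, h2⟩
        constructor
        · rw [(Equiv.swap b b').injective.ne_iff' hswa]; exact h1
        · rw [(Equiv.swap b b').injective.ne_iff' (Equiv.swap_apply_right b b')]; exact h2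
      · rintro ⟨h1, h2⟩
        constructor
        · rw [(Equiv.swap b b').injective.ne_iff' hswa] at h1; exact h1
        · rw [(Equiv.swap b b').injective.ne_iff' (Equiv.swap_apply_right b b')] at h2; exact h2
    have hfun : (fun x : {x : ι // x ≠ a ∧ x ≠ b'} => glue a b v v i' x.1)
        = i' ∘ ((Equiv.swap b b').subtypeEquiv hπ) := by
      funext x
      simp only [Function.comp_apply, Equiv.subtypeEquiv_apply]
      by_cases hxb : x.1 = b
      · have h1 : glue a b v v i' x.1 = v := by rw [hxb, glue_snd hab]
        rw [h1, hv]
        congr 1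
        apply Subtype.ext
        simp [hxb, Equiv.swap_apply_left]
      · rw [glue_other _ _ _ x.2.1 hxb]
        congr 1
        apply Subtype.ext
        simp only [Equiv.swap_apply_of_ne_of_ne hxb x.2.2]
    rw [hfun, mcount_comp]
  rw [Finset.sum_congr rfl hrest, Finset.sum_const, hbterm, Finset.card_erase_of_mem hb,
    Finset.card_erase_of_mem (Finset.mem_univ a), Finset.card_univ, smul_eq_mul]
  have h2 : Fintype.card ι - 1 - 1 = Fintype.card ι - 2 := by omega
  rw [h2, add_mul]
  ring

/-- Lemma (C): `∑_i m(i)² = (2k-1)!! · d(d+2)⋯(d+2k-2)`. -/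
lemma lemC (d : ℕ) : ∀ (k : ℕ) (ι : Type) [Fintype ι] [DecidableEq ι],
    Fintype.card ι = 2 * k →
    ∑ i : ι → Fin d, mcount i * mcount i
      = (∏ j ∈ Finset.range k, (2 * j + 1)) * ∏ j ∈ Finset.range k, (d + 2 * j) := by
  intro k
  induction k with
  | zero =>
    intro ι _ _ hcard
    have hemp : IsEmpty ι := Fintype.card_eq_zero_iff.mp (by simpa using hcard)
    have h1 : ∀ i : ι → Fin d, mcount i = 1 := by
      intro i
      unfold mcount pairingSet
      rw [Finset.filter_true_of_mem (fun P _ => ⟨fun x => hemp.elim x,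
        fun x => hemp.elim x, fun x => hemp.elim x⟩), Finset.card_univ, Fintype.card_fun]
      simp [hcard]
    have h2 : Fintype.card (ι → Fin d) = 1 := by
      rw [Fintype.card_fun]; simp [hcard]
    simp only [h1, mul_one, Finset.prod_range_zero]
    rw [Finset.sum_const, Finset.card_univ, h2, one_smul]
  | succ k IH =>
    intro ι _ _ hcard
    have hpos : 0 < Fintype.card ι := by omega
    obtain ⟨a⟩ := Fintype.card_pos_iff.mp hpos
    have step1 : ∀ i : ι → Fin d, mcount i * mcount i
        = ∑ b ∈ Finset.univ.erase a,
            (if i b = i a then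
              mcount i * mcount (fun y : {y : ι // y ≠ a ∧ y ≠ b} => i y.1)
            else 0) := by
      intro i
      nth_rewrite 1 [mcount_rec a i]
      rw [Finset.sum_mul]
      refine Finset.sum_congr rfl fun b hb => ?_
      split_ifs with h
      · ring
      · simp
    rw [Finset.sum_congr rfl fun i _ => step1 i, Finset.sum_comm]
    have step2 : ∀ b ∈ Finset.univ.erase a,
        (∑ i : ι → Fin d,
          if i b = i a then
            mcount i * mcount (fun y : {y : ι // y ≠ a ∧ y ≠ b} => i y.1)
          else 0)
        = (d + 2 * k) * ((∏ j ∈ Finset.range k, (2 * j + 1))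
            * ∏ j ∈ Finset.range k, (d + 2 * j)) := by
      intro b hb
      have hab : a ≠ b := (Finset.mem_erase.mp hb).1.symm
      rw [sum_glue_diag hab _ (fun i hi => if_neg hi)]
      have inner : ∀ (c : Fin d) (i' : {y : ι // y ≠ a ∧ y ≠ b} → Fin d),
          (if glue a b c c i' b = glue a b c c i' a then
            mcount (glue a b c c i')
              * mcount (fun y : {y : ι // y ≠ a ∧ y ≠ b} => glue a b c c i' y.1)
          else 0)
          = mcount (glue a b c c i') * mcount i' := by
        intro c i'
        rw [glue_fst hab, glue_snd hab, if_pos rfl, restr_glue hab]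
      rw [Finset.sum_congr rfl fun c _ => Finset.sum_congr rfl fun i' _ => inner c i',
        Finset.sum_comm]
      have hsub : Fintype.card {y : ι // y ≠ a ∧ y ≠ b} = 2 * k := by
        rw [card_sub hab]; omega
      have hcol : ∀ i' : {y : ι // y ≠ a ∧ y ≠ b} → Fin d,
          (∑ c : Fin d, mcount (glue a b c c i') * mcount i')
          = (d + 2 * k) * (mcount i' * mcount i') := by
        intro i'
        rw [← Finset.sum_mul, lemB hab i', hcard]
        have : 2 * (k + 1) - 2 = 2 * k := by omega
        rw [this]
        ring
      rw [Finset.sum_congr rfl fun i' _ => hcol i', ← Finset.mul_sum, IH _ hsub]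
    rw [Finset.sum_congr rfl step2, Finset.sum_const]
    have hcarderase : (Finset.univ.erase a).card = 2 * k + 1 := by
      rw [Finset.card_erase_of_mem (Finset.mem_univ a), Finset.card_univ]; omega
    rw [hcarderase, Finset.prod_range_succ, Finset.prod_range_succ, smul_eq_mul]
    ring


end Pairings

open RealInnerProductSpace

/-- `c_{d,k} = (1·3·5⋯(2k−1)) / (d·(d+2)⋯(d+2(k−1)))`. -/
noncomputable def designConst (d k : ℕ) : ℝ :=
  (∏ i ∈ Finset.range k, (2 * (i : ℝ) + 1)) / ∏ i ∈ Finset.range k, ((d : ℝ) + 2 * i)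

/-- For unit vectors `u_1, …, u_L` in `ℝ^d`, condition (b) of
Proposition 2.1 is equivalent to condition (c). -/
theorem stmt_1 (d t L : ℕ) (hd : 1 ≤ d) (hL : 1 ≤ L)
    (u : Fin L → EuclideanSpace ℝ (Fin d)) (hu : ∀ ℓ, ‖u ℓ‖ = 1) :
    (∀ k, 1 ≤ k → k ≤ t → ∀ x : EuclideanSpace ℝ (Fin d),
        (1 / (L : ℝ)) * ∑ ℓ, ⟪x, u ℓ⟫ ^ (2 * k) = designConst d k * ‖x‖ ^ (2 * k))
    ↔ (∀ k, 1 ≤ k → k ≤ t →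
        (1 / (L : ℝ) ^ 2) * ∑ ℓ, ∑ ℓ', ⟪u ℓ, u ℓ'⟫ ^ (2 * k) = designConst d k) := by
  have hL0 : (L : ℝ) ≠ 0 := Nat.cast_ne_zero.mpr (by omega)
  have hinner : ∀ x y : EuclideanSpace ℝ (Fin d), ⟪x, y⟫ = ∑ c, x c * y c := by
    intro x y
    simp [PiLp.inner_apply, RCLike.inner_apply, conj_trivial]
    exact Finset.sum_congr rfl fun _ _ => mul_comm _ _
  have hnormsq : ∀ x : EuclideanSpace ℝ (Fin d), (∑ c, x c ^ 2) = ‖x‖ ^ 2 := by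
    intro x
    rw [← real_inner_self_eq_norm_sq, hinner]
    exact Finset.sum_congr rfl fun c _ => sq (x c)
  have hnormpow : ∀ (x : EuclideanSpace ℝ (Fin d)) (k : ℕ),
      ‖x‖ ^ (2 * k) = (∑ c, x c ^ 2) ^ k := by
    intro x k
    rw [hnormsq, ← pow_mul]
  have hF1 : ∀ (k : ℕ) (v w : EuclideanSpace ℝ (Fin d)),
      ∑ i : Fin (2 * k) → Fin d, (∏ j, v (i j)) * (∏ j, w (i j)) = ⟪v, w⟫ ^ (2 * k) := by
    intro k v w
    rw [hinner, Finset.sum_pow']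
    rw [show (Fintype.piFinset fun _ : Fin (2 * k) => (Finset.univ : Finset (Fin d)))
      = Finset.univ from Fintype.piFinset_univ]
    exact Finset.sum_congr rfl fun i _ => (Finset.prod_mul_distrib).symm
  constructor
  · -- (b) → (c)
    intro hb k hk1 hkt
    have hsum : ∑ ℓ, ∑ ℓ', ⟪u ℓ, u ℓ'⟫ ^ (2 * k)
        = ∑ _ℓ : Fin L, (L : ℝ) * designConst d k := by
      refine Finset.sum_congr rfl fun ℓ _ => ?_
      have h := hb k hk1 hkt (u ℓ)
      rw [hu ℓ, one_pow, mul_one] at h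
      rw [← h]
      field_simp
    rw [hsum, Finset.sum_const, Finset.card_univ, Fintype.card_fin, nsmul_eq_mul]
    field_simp
  · -- (c) → (b)
    intro hc k hk1 hkt x
    have hS := hc k hk1 hkt
    set D : ℝ := ∏ j ∈ Finset.range k, (2 * (j : ℝ) + 1) with hD
    set P : ℝ := ∏ j ∈ Finset.range k, ((d : ℝ) + 2 * j) with hP
    have hd1 : (1 : ℝ) ≤ (d : ℝ) := by exact_mod_cast hd
    have hPpos : 0 < P := by
      rw [hP]
      refine Finset.prod_pos fun j _ => ?_
      have h2j : (0 : ℝ) ≤ 2 * j := by positivity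
      linarith
    have hcP : designConst d k = D / P := rfl
    have hA : ∀ v : EuclideanSpace ℝ (Fin d),
        ∑ i : Fin (2 * k) → Fin d, (mcount i : ℝ) * ∏ j, v (i j) = D * ‖v‖ ^ (2 * k) := by
      intro v
      have h := lemA d k (Fin (2 * k)) (Fintype.card_fin _) (fun c => v c)
      rw [← hD] at h
      rw [hnormpow v k]
      exact h
    have hmm' : ∑ i : Fin (2 * k) → Fin d, (mcount i : ℝ) * (mcount i : ℝ) = D * P := by
      have h := lemC d k (Fin (2 * k)) (Fintype.card_fin _)
      have hcast : ((∑ i : Fin (2 * k) → Fin d, mcount i * mcount i : ℕ) : ℝ)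
          = ∑ i : Fin (2 * k) → Fin d, (mcount i : ℝ) * (mcount i : ℝ) := by
        push_cast
        rfl
      rw [← hcast, h]
      push_cast
      rw [hD, hP]
    set A : (Fin (2 * k) → Fin d) → ℝ := fun i => ∑ ℓ, ∏ j, u ℓ (i j) with hA'
    set T : (Fin (2 * k) → Fin d) → ℝ :=
      fun i => (1 / (L : ℝ)) * A i - P⁻¹ * (mcount i : ℝ) with hT
    have hAsum : ∀ y : EuclideanSpace ℝ (Fin d),
        ∑ i : Fin (2 * k) → Fin d, A i * ∏ j, y (i j) = ∑ ℓ, ⟪y, u ℓ⟫ ^ (2 * k) := by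
      intro y
      calc ∑ i : Fin (2 * k) → Fin d, A i * ∏ j, y (i j)
          = ∑ i : Fin (2 * k) → Fin d, ∑ ℓ, (∏ j, u ℓ (i j)) * (∏ j, y (i j)) := by
            refine Finset.sum_congr rfl fun i _ => ?_
            rw [hA', Finset.sum_mul]
        _ = ∑ ℓ, ∑ i : Fin (2 * k) → Fin d, (∏ j, u ℓ (i j)) * (∏ j, y (i j)) :=
            Finset.sum_comm
        _ = ∑ ℓ, ⟪y, u ℓ⟫ ^ (2 * k) := by
            refine Finset.sum_congr rfl fun ℓ _ => ?_
            rw [hF1 k (u ℓ) y, real_inner_comm]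
    have hAA : ∑ i : Fin (2 * k) → Fin d, A i * A i
        = ∑ ℓ, ∑ ℓ', ⟪u ℓ, u ℓ'⟫ ^ (2 * k) := by
      calc ∑ i : Fin (2 * k) → Fin d, A i * A i
          = ∑ i : Fin (2 * k) → Fin d, ∑ ℓ, ∑ ℓ',
              (∏ j, u ℓ (i j)) * (∏ j, u ℓ' (i j)) := by
            refine Finset.sum_congr rfl fun i _ => ?_
            rw [hA', Finset.sum_mul_sum]
        _ = ∑ ℓ, ∑ i : Fin (2 * k) → Fin d, ∑ ℓ',
              (∏ j, u ℓ (i j)) * (∏ j, u ℓ' (i j)) := Finset.sum_comm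
        _ = ∑ ℓ, ∑ ℓ', ∑ i : Fin (2 * k) → Fin d,
              (∏ j, u ℓ (i j)) * (∏ j, u ℓ' (i j)) :=
            Finset.sum_congr rfl fun ℓ _ => Finset.sum_comm
        _ = ∑ ℓ, ∑ ℓ', ⟪u ℓ, u ℓ'⟫ ^ (2 * k) :=
            Finset.sum_congr rfl fun ℓ _ =>
              Finset.sum_congr rfl fun ℓ' _ => hF1 k (u ℓ) (u ℓ')
    have hAm : ∑ i : Fin (2 * k) → Fin d, A i * (mcount i : ℝ) = (L : ℝ) * D := by
      calc ∑ i : Fin (2 * k) → Fin d, A i * (mcount i : ℝ)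
          = ∑ i : Fin (2 * k) → Fin d, ∑ ℓ, (mcount i : ℝ) * ∏ j, u ℓ (i j) := by
            refine Finset.sum_congr rfl fun i _ => ?_
            rw [hA', Finset.sum_mul]
            exact Finset.sum_congr rfl fun ℓ _ => mul_comm _ _
        _ = ∑ ℓ, ∑ i : Fin (2 * k) → Fin d, (mcount i : ℝ) * ∏ j, u ℓ (i j) :=
            Finset.sum_comm
        _ = ∑ ℓ : Fin L, D := by
            refine Finset.sum_congr rfl fun ℓ _ => ?_
            rw [hA (u ℓ), hu ℓ, one_pow, mul_one]
        _ = (L : ℝ) * D := by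
            rw [Finset.sum_const, Finset.card_univ, Fintype.card_fin, nsmul_eq_mul]
    have hT2 : ∑ i : Fin (2 * k) → Fin d, T i * T i
        = (1 / (L : ℝ) ^ 2) * (∑ ℓ, ∑ ℓ', ⟪u ℓ, u ℓ'⟫ ^ (2 * k)) - designConst d k := by
      have expand : ∀ i : Fin (2 * k) → Fin d, T i * T i
          = (1 / (L : ℝ)) * (1 / (L : ℝ)) * (A i * A i)
            - 2 * (1 / (L : ℝ)) * P⁻¹ * (A i * (mcount i : ℝ))
            + P⁻¹ * P⁻¹ * ((mcount i : ℝ) * (mcount i : ℝ)) := by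
        intro i
        rw [hT]
        ring
      rw [Finset.sum_congr rfl fun i _ => expand i]
      rw [Finset.sum_add_distrib, Finset.sum_sub_distrib,
        ← Finset.mul_sum, ← Finset.mul_sum, ← Finset.mul_sum, hAA, hAm, hmm', hcP]
      field_simp
      ring
    have hT0 : ∀ i : Fin (2 * k) → Fin d, T i = 0 := by
      have h0 : ∑ i : Fin (2 * k) → Fin d, T i * T i = 0 := by
        rw [hT2, hS, sub_self]
      intro i
      have := (Finset.sum_eq_zero_iff_of_nonneg
        (fun i _ => mul_self_nonneg (T i))).mp h0 i (Finset.mem_univ i)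
      exact mul_self_eq_zero.mp this
    have hfinal : (0 : ℝ)
        = (1 / (L : ℝ)) * (∑ ℓ, ⟪x, u ℓ⟫ ^ (2 * k)) - designConst d k * ‖x‖ ^ (2 * k) := by
      have expand : ∀ i : Fin (2 * k) → Fin d, T i * ∏ j, x (i j)
          = (1 / (L : ℝ)) * (A i * ∏ j, x (i j))
            - P⁻¹ * ((mcount i : ℝ) * ∏ j, x (i j)) := by
        intro i
        rw [hT]
        ring
      have hz : ∑ i : Fin (2 * k) → Fin d, T i * ∏ j, x (i j) = 0 :=
        Finset.sum_eq_zero fun i _ => by rw [hT0 i, zero_mul]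
      rw [← hz, Finset.sum_congr rfl fun i _ => expand i, Finset.sum_sub_distrib,
        ← Finset.mul_sum, ← Finset.mul_sum, hAsum x, hA x, hcP]
      field_simp
    linarith [hfinal]
end

section
/- Let d be an even positive integer. Suppose that for each b ∈ {1, …, d/2+1}, the vectors {u_{b,i}}_{i∈[d]} form an orthonormal basis of ℝ^d, and that for all b ≠ b' and all i, j ∈ [d], ⟨u_{b,i}, u_{b',j}⟩² = 1/d (i.e., the bases are pairwise unbiased). Then the collection {u_{b,i}}_{b∈[d/2+1], i∈[d]} of L = d(d/2+1) unit vectors forms a projective 2-design for ℝ^d; that is, (1/L²)·∑_{(b,i)}∑_{(b',j)} ⟨u_{b,i}, u_{b',j}⟩² = 1/d and (1/L²)·∑_{(b,i)}∑_{(b',j)} ⟨u_{b,i}, u_{b',j}⟩⁴ = 3/(d(d+2)). -/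
open RealInnerProductSpace

/-- A family of `d/2 + 1` pairwise unbiased orthonormal bases of `ℝ^d`
(for `d` even and positive) forms a projective 2-design with `L = d(d/2+1)` vectors:
the second and fourth inner-product moments match `c_{d,1} = 1/d` and
`c_{d,2} = 3/(d(d+2))` respectively. -/
theorem stmt_2 (d : ℕ) (hd : 0 < d) (hde : Even d)
    (u : Fin (d / 2 + 1) → Fin d → EuclideanSpace ℝ (Fin d))
    (horth : ∀ b, Orthonormal ℝ (u b))
    (hunb : ∀ b b', b ≠ b' → ∀ i j, ⟪u b i, u b' j⟫ ^ 2 = 1 / (d : ℝ)) :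
    (1 / ((d * (d / 2 + 1) : ℕ) : ℝ) ^ 2) *
        ∑ b, ∑ i, ∑ b', ∑ j, ⟪u b i, u b' j⟫ ^ 2 = 1 / (d : ℝ) ∧
    (1 / ((d * (d / 2 + 1) : ℕ) : ℝ) ^ 2) *
        ∑ b, ∑ i, ∑ b', ∑ j, ⟪u b i, u b' j⟫ ^ 4 = 3 / ((d : ℝ) * ((d : ℝ) + 2)) := by
  obtain ⟨k, hk⟩ := hde
  have hk2 : d / 2 = k := by omega
  have hk0 : 0 < k := by omega
  have hdR : (d : ℝ) = 2 * k := by rw [hk]; push_cast; ring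
  have hkR : (0 : ℝ) < k := by exact_mod_cast hk0
  have hdne : (d : ℝ) ≠ 0 := by positivity
  have h2 : ∀ b (i : Fin d) b', ∑ j, ⟪u b i, u b' j⟫ ^ 2 = 1 := by
    intro b i b'
    by_cases h : b = b'
    · subst h
      simp only [orthonormal_iff_ite.mp (horth b)]
      simp [apply_ite (· ^ 2)]
    · simp only [hunb b b' h i]
      rw [Finset.sum_const, Finset.card_fin]
      rw [nsmul_eq_mul]
      field_simp
  have h4 : ∀ b (i : Fin d) b', ∑ j, ⟪u b i, u b' j⟫ ^ 4 =
      if b = b' then 1 else 1 / (d : ℝ) := by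
    intro b i b'
    by_cases h : b = b'
    · subst h
      simp only [orthonormal_iff_ite.mp (horth b)]
      simp [apply_ite (· ^ 4)]
    · have he : ∀ j, ⟪u b i, u b' j⟫ ^ 4 = (1 / (d : ℝ)) ^ 2 := by
        intro j
        rw [show (4 : ℕ) = 2 * 2 from rfl, pow_mul, hunb b b' h i j]
      simp only [he, if_neg h]
      rw [Finset.sum_const, Finset.card_fin]
      field_simp
      ring_nf
      rw [← mul_pow, mul_inv_cancel₀ hdne, one_pow]
  constructor
  · simp only [h2]
    rw [Finset.sum_const, Finset.card_fin]
    simp only [Finset.sum_const, Finset.card_fin, Finset.card_univ, Fintype.card_fin,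
      nsmul_eq_mul]
    push_cast [hk2]
    field_simp
  · simp only [h4]
    have hsum : ∀ b : Fin (d / 2 + 1), ∑ b', (if b = b' then (1 : ℝ) else 1 / d) =
        ((d / 2 + 1 : ℕ) : ℝ) * (1 / d) + (1 - 1 / d) := by
      intro b
      have : ∀ b' : Fin (d / 2 + 1), (if b = b' then (1 : ℝ) else 1 / d) =
          1 / d + (if b = b' then 1 - 1 / (d : ℝ) else 0) := by
        intro b'; split_ifs <;> ring
      simp only [this, Finset.sum_add_distrib, Finset.sum_const, Finset.card_univ,
        Fintype.card_fin, Finset.sum_ite_eq, Finset.mem_univ, if_true, nsmul_eq_mul]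
    simp only [hsum, Finset.sum_const, Finset.card_univ, Fintype.card_fin, nsmul_eq_mul]
    push_cast [hk2]
    rw [hdR]
    have h2k : (2 : ℝ) * k ≠ 0 := by positivity
    have hk1 : (k : ℝ) + 1 ≠ 0 := by positivity
    field_simp
    ring
end

section
/- Let d ≥ n ≥ 1, let {u_ℓ}_{ℓ∈[L]} be a projective 2-design for ℝ^d, let Π : ℝ^d → ℝ^n denote the projection onto the first n coordinates, and let Π* : ℝ^n → ℝ^d be its adjoint. Then for every a ∈ ℝ^n and every unit vector x ∈ ℝ^n, the variance of the random variable Y := d·⟨Π*a, u⟩·⟨u, Π*x⟩ (where u is uniformly distributed over {u_ℓ : ℓ ∈ [L]}) satisfies Var(Y) = (1/L)·∑_ℓ (d·⟨Π*a, u_ℓ⟩·⟨u_ℓ, Π*x⟩)² − ⟨a, x⟩² ≤ 2·‖a‖². -/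
open RealInnerProductSpace

/-- For a projective 2-design `{u_ℓ}` in `ℝ^d`, the embedding `Π*` of
`ℝ^n` into the first `n` coordinates of `ℝ^d` (`d ≥ n`), any `a ∈ ℝ^n`, and any unit
vector `x ∈ ℝ^n`, the variance of `Y = d·⟨Π*a, u⟩·⟨u, Π*x⟩` (with `u` uniform over
`{u_ℓ}`), namely `(1/L)·∑_ℓ (d·⟨Π*a, u_ℓ⟩·⟨u_ℓ, Π*x⟩)² − ⟨a,x⟩²`, is at most `2‖a‖²`. -/
theorem stmt_4 (d n L : ℕ) (hn : 1 ≤ n) (hnd : n ≤ d) (hL : 1 ≤ L)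
    (u : Fin L → EuclideanSpace ℝ (Fin d)) (hu : ∀ ℓ, ‖u ℓ‖ = 1)
    (h2 : ∀ x : EuclideanSpace ℝ (Fin d),
      (1 / (L : ℝ)) * ∑ ℓ, ⟪x, u ℓ⟫ ^ 2 = ‖x‖ ^ 2 / d)
    (h4 : ∀ x : EuclideanSpace ℝ (Fin d),
      (1 / (L : ℝ)) * ∑ ℓ, ⟪x, u ℓ⟫ ^ 4 = 3 * ‖x‖ ^ 4 / ((d : ℝ) * ((d : ℝ) + 2)))
    (emb : EuclideanSpace ℝ (Fin n) → EuclideanSpace ℝ (Fin d))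
    (hemb : ∀ (a : EuclideanSpace ℝ (Fin n)) (i : Fin d),
      emb a i = if h : (i : ℕ) < n then a ⟨i, h⟩ else 0)
    (a x : EuclideanSpace ℝ (Fin n)) (hx : ‖x‖ = 1) :
    (1 / (L : ℝ)) * (∑ ℓ, ((d : ℝ) * ⟪emb a, u ℓ⟫ * ⟪u ℓ, emb x⟫) ^ 2) - ⟪a, x⟫ ^ 2
      ≤ 2 * ‖a‖ ^ 2 := by
  have hd1 : 1 ≤ d := hn.trans hnd
  have hd0 : (0:ℝ) < d := by exact_mod_cast hd1
  -- the embedding preserves inner products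
  have key : ∀ b c : EuclideanSpace ℝ (Fin n), ⟪emb b, emb c⟫ = ⟪b, c⟫ := by
    intro b c
    simp only [PiLp.inner_apply, RCLike.inner_apply, conj_trivial]
    rw [Finset.sum_congr rfl fun i _ => mul_comm (c i) (b i),
      Finset.sum_congr rfl fun i _ => mul_comm (emb c i) (emb b i)]
    calc ∑ i : Fin d, emb b i * emb c i
        = ∑ i ∈ Finset.range d,
            (if h : i < n then b ⟨i, h⟩ else 0) * (if h : i < n then c ⟨i, h⟩ else 0) := by
          rw [← Fin.sum_univ_eq_sum_range]
          exact Finset.sum_congr rfl fun i _ => by rw [hemb, hemb]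
      _ = ∑ i ∈ Finset.range n,
            (if h : i < n then b ⟨i, h⟩ else 0) * (if h : i < n then c ⟨i, h⟩ else 0) := by
          refine (Finset.sum_subset (Finset.range_subset_range.2 hnd) fun i _ hi => ?_).symm
          rw [dif_neg (by simpa using hi)]; ring
      _ = ∑ j : Fin n, b j * c j := by
          rw [← Fin.sum_univ_eq_sum_range]
          exact Finset.sum_congr rfl fun j _ => by
            rw [dif_pos j.isLt]; simp
  set A := emb a with hA
  set X := emb x with hX
  have hAX : ⟪A, X⟫ = ⟪a, x⟫ := key a x
  have hA2 : ‖A‖ ^ 2 = ‖a‖ ^ 2 := by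
    rw [← real_inner_self_eq_norm_sq, ← real_inner_self_eq_norm_sq]; exact key a a
  have hX2 : ‖X‖ ^ 2 = 1 := by
    rw [← real_inner_self_eq_norm_sq, key, real_inner_self_eq_norm_sq, hx]; norm_num
  set s := ‖a‖ ^ 2 with hs
  set t := ⟪a, x⟫ with ht
  set S := ∑ ℓ, ((d : ℝ) * ⟪A, u ℓ⟫ * ⟪u ℓ, X⟫) ^ 2 with hSdef
  set Sp := ∑ ℓ, ⟪A + X, u ℓ⟫ ^ 4 with hSp
  set Sm := ∑ ℓ, ⟪A - X, u ℓ⟫ ^ 4 with hSm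
  set Sa := ∑ ℓ, ⟪A, u ℓ⟫ ^ 4 with hSa
  set Sx := ∑ ℓ, ⟪X, u ℓ⟫ ^ 4 with hSx
  clear_value A X s t S Sp Sm Sa Sx
  have hS : 12 * S = (d : ℝ) ^ 2 * (Sp + Sm - 2 * Sa - 2 * Sx) := by
    simp only [hSdef, hSp, hSm, hSa, hSx, Finset.mul_sum, ← Finset.sum_add_distrib,
      ← Finset.sum_sub_distrib]
    refine Finset.sum_congr rfl fun ℓ _ => ?_
    rw [inner_add_left, inner_sub_left, real_inner_comm (u ℓ) X]
    ring
  have hp := h4 (A + X)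
  have hm := h4 (A - X)
  have ha4 := h4 A
  have hx4 := h4 X
  have hnp : ‖A + X‖ ^ 2 = s + 1 + 2 * t := by
    rw [@norm_add_sq_real, hA2, hX2, hAX]; ring
  have hnm : ‖A - X‖ ^ 2 = s + 1 - 2 * t := by
    rw [@norm_sub_sq_real, hA2, hX2, hAX]; ring
  have h4p : ‖A + X‖ ^ 4 = (s + 1 + 2 * t) ^ 2 := by rw [← hnp]; ring
  have h4m : ‖A - X‖ ^ 4 = (s + 1 - 2 * t) ^ 2 := by rw [← hnm]; ring
  have h4a : ‖A‖ ^ 4 = s ^ 2 := by rw [← hA2]; ring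
  have h4x : ‖X‖ ^ 4 = 1 := by
    have : ‖X‖ ^ 4 = (‖X‖ ^ 2) ^ 2 := by ring
    rw [this, hX2]; norm_num
  rw [h4p] at hp; rw [h4m] at hm; rw [h4a] at ha4; rw [h4x] at hx4
  have hval : (1 / (L : ℝ)) * S = (d : ℝ) * (s + 2 * t ^ 2) / ((d : ℝ) + 2) := by
    have hd2 : (d : ℝ) * ((d : ℝ) + 2) ≠ 0 := by positivity
    have hES : (1 / (L : ℝ)) * S = (d : ℝ) ^ 2 / 12 *
        ((1 / (L : ℝ)) * Sp + (1 / (L : ℝ)) * Sm - 2 * ((1 / (L : ℝ)) * Sa)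
          - 2 * ((1 / (L : ℝ)) * Sx)) := by
      linear_combination (1 / (12 * (L : ℝ))) * hS
    rw [hES, hSp, hSm, hSa, hSx, hp, hm, ha4, hx4]
    field_simp
    ring
  have htle : t ^ 2 ≤ s := by
    rw [ht, hs, sq]
    have h := real_inner_mul_inner_self_le a x
    have h2' : (⟪a, a⟫ : ℝ) * ⟪x, x⟫ = ‖a‖ ^ 2 := by
      rw [real_inner_self_eq_norm_sq, real_inner_self_eq_norm_sq, hx]; norm_num
    linarith
  have hs0 : (0:ℝ) ≤ s := hs ▸ (by positivity)
  have hbound : (d : ℝ) * (s + 2 * t ^ 2) / ((d : ℝ) + 2) ≤ s + 2 * t ^ 2 := by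
    rw [div_le_iff₀ (by linarith : (0:ℝ) < (d : ℝ) + 2)]
    nlinarith [sq_nonneg t]
  rw [hval]
  linarith
end

section
/- Let d ≥ 1, let u be uniformly distributed on the unit sphere S^{d-1} ⊆ ℝ^d, let a ∈ ℝ^d, and let x ∈ ℝ^d be a unit vector. Then E[(d·⟨a, u⟩·⟨u, x⟩)²] = (3d/(d+2))·⟨a, x⟩² + (d/(d+2))·(‖a‖² − ⟨a, x⟩²); consequently, since E[d·⟨a, u⟩·⟨u, x⟩] = ⟨a, x⟩, the variance of d·⟨a, u⟩·⟨u, x⟩ equals 2⟨a, x⟩²·(d−1)/(d+2) + (‖a‖² − ⟨a, x⟩²)·d/(d+2), which is at most 2‖a‖². -/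
open MeasureTheory RealInnerProductSpace

namespace Stmt5Aux

variable {d : ℕ}

noncomputable def sphereMap (Q : EuclideanSpace ℝ (Fin d) ≃ₗᵢ[ℝ] EuclideanSpace ℝ (Fin d)) :
    Metric.sphere (0 : EuclideanSpace ℝ (Fin d)) 1 ≃ᵐ
      Metric.sphere (0 : EuclideanSpace ℝ (Fin d)) 1 where
  toFun v := ⟨Q v, by
    rw [mem_sphere_zero_iff_norm, Q.norm_map, ← mem_sphere_zero_iff_norm]; exact v.2⟩
  invFun v := ⟨Q.symm v, by
    rw [mem_sphere_zero_iff_norm, Q.symm.norm_map, ← mem_sphere_zero_iff_norm]; exact v.2⟩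
  left_inv v := by ext; simp
  right_inv v := by ext; simp
  measurable_toFun := Continuous.measurable (by
    exact Continuous.subtype_mk (Q.continuous.comp continuous_subtype_val) _)
  measurable_invFun := Continuous.measurable (by
    exact Continuous.subtype_mk (Q.symm.continuous.comp continuous_subtype_val) _)

def Inv (σ : Measure (Metric.sphere (0 : EuclideanSpace ℝ (Fin d)) 1)) : Prop :=
  ∀ Q : EuclideanSpace ℝ (Fin d) ≃ₗᵢ[ℝ] EuclideanSpace ℝ (Fin d),
      MeasurePreserving
        (fun v : Metric.sphere (0 : EuclideanSpace ℝ (Fin d)) 1 =>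
          (⟨Q v, by
              rw [mem_sphere_zero_iff_norm, Q.norm_map, ← mem_sphere_zero_iff_norm]
              exact v.2⟩ :
            Metric.sphere (0 : EuclideanSpace ℝ (Fin d)) 1)) σ σ

variable {σ : Measure (Metric.sphere (0 : EuclideanSpace ℝ (Fin d)) 1)} [IsProbabilityMeasure σ]

theorem integral_comp (hσ : Inv σ)
    (Q : EuclideanSpace ℝ (Fin d) ≃ₗᵢ[ℝ] EuclideanSpace ℝ (Fin d))
    (g : EuclideanSpace ℝ (Fin d) → ℝ) :
    ∫ v, g (Q (v : EuclideanSpace ℝ (Fin d))) ∂σ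
      = ∫ v, g (v : EuclideanSpace ℝ (Fin d)) ∂σ := by
  have hmap : Measure.map (sphereMap Q) σ = σ := (hσ Q).map_eq
  conv_rhs => rw [← hmap]
  rw [MeasureTheory.integral_map_equiv]
  rfl

theorem inner_symmQ (Q : EuclideanSpace ℝ (Fin d) ≃ₗᵢ[ℝ] EuclideanSpace ℝ (Fin d))
    (w v : EuclideanSpace ℝ (Fin d)) : ⟪w, Q v⟫ = ⟪Q.symm w, v⟫ := by
  rw [← Q.inner_map_map (Q.symm w) v, Q.apply_symm_apply]

theorem intg (y z : EuclideanSpace ℝ (Fin d)) (p q : ℕ) :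
    Integrable (fun v : Metric.sphere (0 : EuclideanSpace ℝ (Fin d)) 1 =>
      ⟪y, (v : EuclideanSpace ℝ (Fin d))⟫ ^ p * ⟪z, (v : EuclideanSpace ℝ (Fin d))⟫ ^ q) σ := by
  apply Continuous.integrable_of_hasCompactSupport _ (HasCompactSupport.of_compactSpace _)
  exact ((Continuous.inner continuous_const continuous_subtype_val).pow p).mul
    ((Continuous.inner continuous_const continuous_subtype_val).pow q)

/-- Odd moments vanish. -/
theorem odd_vanish (hσ : Inv σ) (y x : EuclideanSpace ℝ (Fin d)) (h : ⟪y, x⟫ = 0) (k : ℕ) :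
    ∫ v, ⟪y, (v : EuclideanSpace ℝ (Fin d))⟫
      * ⟪x, (v : EuclideanSpace ℝ (Fin d))⟫ ^ k ∂σ = 0 := by
  set Q : EuclideanSpace ℝ (Fin d) ≃ₗᵢ[ℝ] EuclideanSpace ℝ (Fin d) := Submodule.reflection (ℝ ∙ y)ᗮ with hQdef
  have hx : Q x = x := Submodule.reflection_mem_subspace_eq_self
    (by rw [Submodule.mem_orthogonal_singleton_iff_inner_right]; exact h)
  have hy : Q y = -y := Submodule.reflection_orthogonalComplement_singleton_eq_neg y
  have key := integral_comp hσ Q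
    (fun w => ⟪y, w⟫ * ⟪x, w⟫ ^ k)
  have h1 : ∀ v : EuclideanSpace ℝ (Fin d), ⟪y, Q v⟫ = -⟪y, v⟫ := by
    intro v
    rw [inner_symmQ, hQdef, Submodule.reflection_symm, ← hQdef, hy, inner_neg_left]
  have h2 : ∀ v : EuclideanSpace ℝ (Fin d), ⟪x, Q v⟫ = ⟪x, v⟫ := by
    intro v
    rw [inner_symmQ, hQdef, Submodule.reflection_symm, ← hQdef, hx]
  simp only [h1, h2, neg_mul] at key
  rw [integral_neg] at key
  linarith

/-- `∫ ⟪x,v⟫^n` depends only on `‖x‖` for unit vectors. -/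
theorem pow_const (hσ : Inv σ) (x y : EuclideanSpace ℝ (Fin d))
    (hx : ‖x‖ = 1) (hy : ‖y‖ = 1) (n : ℕ) :
    ∫ v, ⟪x, (v : EuclideanSpace ℝ (Fin d))⟫ ^ n ∂σ
      = ∫ v, ⟪y, (v : EuclideanSpace ℝ (Fin d))⟫ ^ n ∂σ := by
  set Q : EuclideanSpace ℝ (Fin d) ≃ₗᵢ[ℝ] EuclideanSpace ℝ (Fin d) :=
    Submodule.reflection (ℝ ∙ (x - y))ᗮ with hQdef
  have hxy : Q x = y := Submodule.reflection_sub (by rw [hx, hy])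
  have key := integral_comp hσ Q (fun w => ⟪x, w⟫ ^ n)
  have h1 : ∀ v : EuclideanSpace ℝ (Fin d), ⟪x, Q v⟫ = ⟪y, v⟫ := by
    intro v
    rw [inner_symmQ, hQdef, Submodule.reflection_symm, ← hQdef, hxy]
  simp only [h1] at key
  exact key.symm


theorem sum_inner_sq (v : Metric.sphere (0 : EuclideanSpace ℝ (Fin d)) 1) :
    ∑ i : Fin d, ⟪EuclideanSpace.single i (1:ℝ), (v : EuclideanSpace ℝ (Fin d))⟫ ^ 2 = 1 := by
  have hv : ‖(v : EuclideanSpace ℝ (Fin d))‖ = 1 := by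
    have := v.2; rwa [mem_sphere_zero_iff_norm] at this
  have h1 : ∀ i, ⟪EuclideanSpace.single i (1:ℝ), (v : EuclideanSpace ℝ (Fin d))⟫
      = (v : EuclideanSpace ℝ (Fin d)) i := by
    intro i; rw [EuclideanSpace.inner_single_left]; simp
  simp only [h1]
  have h2 : ∑ i : Fin d, ((v : EuclideanSpace ℝ (Fin d)) i) ^ 2
      = ⟪(v : EuclideanSpace ℝ (Fin d)), (v : EuclideanSpace ℝ (Fin d))⟫ := by
    rw [PiLp.inner_apply]
    simp [sq, RCLike.inner_apply]
  rw [h2, real_inner_self_eq_norm_sq, hv]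
  norm_num

theorem norm_single_one (i : Fin d) : ‖EuclideanSpace.single i (1:ℝ)‖ = 1 := by
  rw [EuclideanSpace.norm_single]; norm_num

/-- Second moment: `∫ ⟪x,v⟫² = 1/d` for unit `x`. -/
theorem c2_val (hσ : Inv σ) (hd : 1 ≤ d) (x : EuclideanSpace ℝ (Fin d)) (hx : ‖x‖ = 1) :
    ∫ v, ⟪x, (v : EuclideanSpace ℝ (Fin d))⟫ ^ 2 ∂σ = 1 / d := by
  have hsum : ∑ i : Fin d, ∫ v, ⟪EuclideanSpace.single i (1:ℝ),
      (v : EuclideanSpace ℝ (Fin d))⟫ ^ 2 ∂σ = 1 := by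
    rw [← integral_finset_sum]
    · simp only [sum_inner_sq]
      simp
    · intro i _
      simpa using intg (σ := σ) (EuclideanSpace.single i (1:ℝ)) 0 2 0
  have heach : ∀ i : Fin d, ∫ v, ⟪EuclideanSpace.single i (1:ℝ),
      (v : EuclideanSpace ℝ (Fin d))⟫ ^ 2 ∂σ
      = ∫ v, ⟪x, (v : EuclideanSpace ℝ (Fin d))⟫ ^ 2 ∂σ :=
    fun i => pow_const hσ _ x (norm_single_one i) hx 2
  simp only [heach, Finset.sum_const, Finset.card_univ, Fintype.card_fin, nsmul_eq_mul] at hsum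
  have hd0 : (d : ℝ) ≠ 0 := by positivity
  rw [eq_div_iff hd0]
  linarith [hsum]

/-- Mixed fourth moment in terms of the pure fourth moment:
for orthonormal `x, y`, `3 ∫ ⟪x,v⟫²⟪y,v⟫² = ∫ ⟪x,v⟫⁴`. -/
theorem m22_eq (hσ : Inv σ) (x y : EuclideanSpace ℝ (Fin d))
    (hx : ‖x‖ = 1) (hy : ‖y‖ = 1) (hxy : ⟪x, y⟫ = 0) :
    3 * ∫ v, ⟪x, (v : EuclideanSpace ℝ (Fin d))⟫ ^ 2
        * ⟪y, (v : EuclideanSpace ℝ (Fin d))⟫ ^ 2 ∂σ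
      = ∫ v, ⟪x, (v : EuclideanSpace ℝ (Fin d))⟫ ^ 4 ∂σ := by
  have h2 : ‖x + y‖ = Real.sqrt 2 := by
    have h : ‖x + y‖ ^ 2 = 2 := by rw [norm_add_sq_real, hx, hy, hxy]; ring
    rw [← Real.sqrt_sq (norm_nonneg _), h]
  have h2' : ‖x - y‖ = Real.sqrt 2 := by
    have h : ‖x - y‖ ^ 2 = 2 := by rw [norm_sub_sq_real, hx, hy, hxy]; ring
    rw [← Real.sqrt_sq (norm_nonneg _), h]
  have hs2 : Real.sqrt 2 ≠ 0 := by positivity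
  set wp : EuclideanSpace ℝ (Fin d) := (Real.sqrt 2)⁻¹ • (x + y) with hwp
  set wm : EuclideanSpace ℝ (Fin d) := (Real.sqrt 2)⁻¹ • (x - y) with hwm
  have hwpn : ‖wp‖ = 1 := by
    rw [hwp, norm_smul, h2]; simp [abs_of_nonneg, Real.sqrt_nonneg]
  have hwmn : ‖wm‖ = 1 := by
    rw [hwm, norm_smul, h2']; simp [abs_of_nonneg, Real.sqrt_nonneg]
  have hsq : ((Real.sqrt 2)⁻¹) ^ 4 = 4⁻¹ := by
    have : (Real.sqrt 2) ^ 2 = 2 := Real.sq_sqrt (by norm_num)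
    have h4 : (Real.sqrt 2) ^ 4 = 4 := by nlinarith
    rw [inv_pow, h4]
  -- pointwise identity
  have hpt : ∀ v : EuclideanSpace ℝ (Fin d),
      ⟪wp, v⟫ ^ 4 + ⟪wm, v⟫ ^ 4
        = (1/2) * ⟪x, v⟫ ^ 4 + ((1/2) * ⟪y, v⟫ ^ 4 + 3 * (⟪x, v⟫ ^ 2 * ⟪y, v⟫ ^ 2)) := by
    intro v
    have hp : ⟪wp, v⟫ = (Real.sqrt 2)⁻¹ * (⟪x, v⟫ + ⟪y, v⟫) := by
      rw [hwp, real_inner_smul_left, inner_add_left]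
    have hm : ⟪wm, v⟫ = (Real.sqrt 2)⁻¹ * (⟪x, v⟫ - ⟪y, v⟫) := by
      rw [hwm, real_inner_smul_left, inner_sub_left]
    rw [hp, hm, mul_pow, mul_pow, hsq]
    ring
  have hxint : Integrable (fun v : Metric.sphere (0 : EuclideanSpace ℝ (Fin d)) 1 =>
      ⟪x, (v : EuclideanSpace ℝ (Fin d))⟫ ^ 4) σ := by
    simpa using intg (σ := σ) x 0 4 0
  have hyint : Integrable (fun v : Metric.sphere (0 : EuclideanSpace ℝ (Fin d)) 1 =>
      ⟪y, (v : EuclideanSpace ℝ (Fin d))⟫ ^ 4) σ := by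
    simpa using intg (σ := σ) y 0 4 0
  have hxyint : Integrable (fun v : Metric.sphere (0 : EuclideanSpace ℝ (Fin d)) 1 =>
      ⟪x, (v : EuclideanSpace ℝ (Fin d))⟫ ^ 2 * ⟪y, (v : EuclideanSpace ℝ (Fin d))⟫ ^ 2) σ :=
    intg x y 2 2
  have hwpint : Integrable (fun v : Metric.sphere (0 : EuclideanSpace ℝ (Fin d)) 1 =>
      ⟪wp, (v : EuclideanSpace ℝ (Fin d))⟫ ^ 4) σ := by
    simpa using intg (σ := σ) wp 0 4 0
  have hwmint : Integrable (fun v : Metric.sphere (0 : EuclideanSpace ℝ (Fin d)) 1 =>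
      ⟪wm, (v : EuclideanSpace ℝ (Fin d))⟫ ^ 4) σ := by
    simpa using intg (σ := σ) wm 0 4 0
  have hint2 : Integrable (fun v : Metric.sphere (0 : EuclideanSpace ℝ (Fin d)) 1 =>
      (1/2 : ℝ) * ⟪y, (v : EuclideanSpace ℝ (Fin d))⟫ ^ 4
        + 3 * (⟪x, (v : EuclideanSpace ℝ (Fin d))⟫ ^ 2
          * ⟪y, (v : EuclideanSpace ℝ (Fin d))⟫ ^ 2)) σ := by
    exact (hyint.const_mul _).add (hxyint.const_mul _)
  have hkey : (∫ v, ⟪wp, (v : EuclideanSpace ℝ (Fin d))⟫ ^ 4 ∂σ)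
      + ∫ v, ⟪wm, (v : EuclideanSpace ℝ (Fin d))⟫ ^ 4 ∂σ
      = (1/2) * (∫ v, ⟪x, (v : EuclideanSpace ℝ (Fin d))⟫ ^ 4 ∂σ)
        + ((1/2) * (∫ v, ⟪y, (v : EuclideanSpace ℝ (Fin d))⟫ ^ 4 ∂σ)
          + 3 * ∫ v, ⟪x, (v : EuclideanSpace ℝ (Fin d))⟫ ^ 2
            * ⟪y, (v : EuclideanSpace ℝ (Fin d))⟫ ^ 2 ∂σ) := by
    have e0 : (∫ v, (⟪wp, (v : EuclideanSpace ℝ (Fin d))⟫ ^ 4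
          + ⟪wm, (v : EuclideanSpace ℝ (Fin d))⟫ ^ 4) ∂σ)
        = ∫ v, ((1/2 : ℝ) * ⟪x, (v : EuclideanSpace ℝ (Fin d))⟫ ^ 4
          + ((1/2 : ℝ) * ⟪y, (v : EuclideanSpace ℝ (Fin d))⟫ ^ 4
            + 3 * (⟪x, (v : EuclideanSpace ℝ (Fin d))⟫ ^ 2
              * ⟪y, (v : EuclideanSpace ℝ (Fin d))⟫ ^ 2))) ∂σ :=
      integral_congr_ae (by filter_upwards with v; exact hpt _)
    rw [integral_add hwpint hwmint, integral_add (hxint.const_mul _) hint2,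
      integral_add (hyint.const_mul _) (hxyint.const_mul _),
      integral_const_mul, integral_const_mul, integral_const_mul] at e0
    exact e0
  rw [pow_const hσ wp x hwpn hx 4, pow_const hσ wm x hwmn hx 4,
    pow_const hσ y x hy hx 4] at hkey
  linarith

/-- Fourth moment: `∫ ⟪x,v⟫⁴ = 3/(d(d+2))` for unit `x`. -/
theorem c4_val (hσ : Inv σ) (hd : 1 ≤ d) (x : EuclideanSpace ℝ (Fin d)) (hx : ‖x‖ = 1) :
    ∫ v, ⟪x, (v : EuclideanSpace ℝ (Fin d))⟫ ^ 4 ∂σ = 3 / ((d : ℝ) * ((d : ℝ) + 2)) := by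
  have hd' : 0 < d := hd
  set i0 : Fin d := ⟨0, hd⟩ with hi0
  set e : Fin d → EuclideanSpace ℝ (Fin d) := fun i => EuclideanSpace.single i 1 with he
  set c4 := ∫ v, ⟪x, (v : EuclideanSpace ℝ (Fin d))⟫ ^ 4 ∂σ with hc4
  have hc4e : ∀ i, ∫ v, ⟪e i, (v : EuclideanSpace ℝ (Fin d))⟫ ^ 4 ∂σ = c4 :=
    fun i => pow_const hσ _ x (norm_single_one i) hx 4
  have horth : ∀ i : Fin d, i ≠ i0 → ⟪e i0, e i⟫ = 0 := by
    intro i hi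
    rw [he]
    simp only [EuclideanSpace.inner_single_left]
    rw [EuclideanSpace.single_apply]
    simp [hi.symm]
  have hterm : ∀ i : Fin d, i ≠ i0 →
      ∫ v, ⟪e i0, (v : EuclideanSpace ℝ (Fin d))⟫ ^ 2
        * ⟪e i, (v : EuclideanSpace ℝ (Fin d))⟫ ^ 2 ∂σ = c4 / 3 := by
    intro i hi
    have := m22_eq hσ (e i0) (e i) (norm_single_one i0) (norm_single_one i) (horth i hi)
    rw [hc4e i0] at this
    linarith
  have hsum : ∑ i : Fin d, ∫ v, ⟪e i0, (v : EuclideanSpace ℝ (Fin d))⟫ ^ 2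
      * ⟪e i, (v : EuclideanSpace ℝ (Fin d))⟫ ^ 2 ∂σ = 1 / d := by
    rw [← integral_finset_sum _ (fun i _ => intg (e i0) (e i) 2 2)]
    have hpt : ∀ v : Metric.sphere (0 : EuclideanSpace ℝ (Fin d)) 1,
        ∑ i : Fin d, ⟪e i0, (v : EuclideanSpace ℝ (Fin d))⟫ ^ 2
          * ⟪e i, (v : EuclideanSpace ℝ (Fin d))⟫ ^ 2
        = ⟪e i0, (v : EuclideanSpace ℝ (Fin d))⟫ ^ 2 := by
      intro v
      rw [← Finset.mul_sum, sum_inner_sq v, mul_one]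
    rw [integral_congr_ae (Filter.Eventually.of_forall hpt)]
    exact c2_val hσ hd (e i0) (norm_single_one i0)
  rw [← Finset.add_sum_erase _ _ (Finset.mem_univ i0)] at hsum
  have h4 : ∫ v, ⟪e i0, (v : EuclideanSpace ℝ (Fin d))⟫ ^ 2
      * ⟪e i0, (v : EuclideanSpace ℝ (Fin d))⟫ ^ 2 ∂σ = c4 := by
    rw [← hc4e i0]
    apply integral_congr_ae
    filter_upwards with v
    ring
  rw [h4, Finset.sum_congr rfl (fun i hi => hterm i (Finset.ne_of_mem_erase hi)),
    Finset.sum_const, Finset.card_erase_of_mem (Finset.mem_univ i0),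
    Finset.card_univ, Fintype.card_fin, nsmul_eq_mul] at hsum
  have hcast : ((d - 1 : ℕ) : ℝ) = (d : ℝ) - 1 := by
    rw [Nat.cast_sub hd]; norm_num
  rw [hcast] at hsum
  have hd0 : (d : ℝ) ≠ 0 := by positivity
  rw [eq_div_iff (by positivity : (d : ℝ) * ((d : ℝ) + 2) ≠ 0)]
  field_simp at hsum
  nlinarith [hsum]

/-- `∫ ⟪b,v⟫²⟪x,v⟫² = ‖b‖²/(d(d+2))` for unit `x` and `b ⟂ x`. -/
theorem m22_gen (hσ : Inv σ) (hd : 1 ≤ d) (x b : EuclideanSpace ℝ (Fin d))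
    (hx : ‖x‖ = 1) (hbx : ⟪b, x⟫ = 0) :
    ∫ v, ⟪b, (v : EuclideanSpace ℝ (Fin d))⟫ ^ 2
      * ⟪x, (v : EuclideanSpace ℝ (Fin d))⟫ ^ 2 ∂σ
      = ‖b‖ ^ 2 / ((d : ℝ) * ((d : ℝ) + 2)) := by
  rcases eq_or_ne b 0 with rfl | hb0
  · simp
  · set y : EuclideanSpace ℝ (Fin d) := ‖b‖⁻¹ • b with hy
    have hbn : (0:ℝ) < ‖b‖ := norm_pos_iff.mpr hb0
    have hyn : ‖y‖ = 1 := by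
      rw [hy, norm_smul]
      simp [abs_of_nonneg (inv_nonneg.mpr hbn.le)]
      field_simp
    have hxy : ⟪x, y⟫ = 0 := by
      rw [hy, real_inner_smul_right, real_inner_comm, hbx, mul_zero]
    have h1 := m22_eq hσ x y hx hyn hxy
    rw [c4_val hσ hd x hx] at h1
    have hbrepr : ∀ v : EuclideanSpace ℝ (Fin d), ⟪b, v⟫ = ‖b‖ * ⟪y, v⟫ := by
      intro v
      rw [hy, real_inner_smul_left]
      field_simp
    have h2 : ∫ v, ⟪b, (v : EuclideanSpace ℝ (Fin d))⟫ ^ 2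
        * ⟪x, (v : EuclideanSpace ℝ (Fin d))⟫ ^ 2 ∂σ
        = ∫ v, ‖b‖ ^ 2 * (⟪x, (v : EuclideanSpace ℝ (Fin d))⟫ ^ 2
          * ⟪y, (v : EuclideanSpace ℝ (Fin d))⟫ ^ 2) ∂σ := by
      apply integral_congr_ae
      filter_upwards with v
      rw [hbrepr]
      ring
    rw [h2, integral_const_mul, eq_div_iff (by positivity : (d:ℝ) * ((d:ℝ)+2) ≠ 0)]
    rw [eq_div_iff (by positivity : (d:ℝ) * ((d:ℝ)+2) ≠ 0)] at h1
    nlinarith [h1]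

end Stmt5Aux

open Stmt5Aux

/-- For `u` uniformly distributed on the unit sphere `S^{d-1} ⊆ ℝ^d`
(i.e. distributed according to the rotation-invariant probability measure `σ`),
`a ∈ ℝ^d` and a unit vector `x ∈ ℝ^d`, we have
`E[(d⟨a,u⟩⟨u,x⟩)²] = (3d/(d+2))⟨a,x⟩² + (d/(d+2))(‖a‖² − ⟨a,x⟩²)`; moreover
`E[d⟨a,u⟩⟨u,x⟩] = ⟨a,x⟩`, so the variance of `d⟨a,u⟩⟨u,x⟩` equals
`2⟨a,x⟩²(d−1)/(d+2) + (‖a‖² − ⟨a,x⟩²)·d/(d+2)`, which is at most `2‖a‖²`. -/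
theorem stmt_5 (d : ℕ) (hd : 1 ≤ d)
    (σ : Measure (Metric.sphere (0 : EuclideanSpace ℝ (Fin d)) 1))
    [IsProbabilityMeasure σ]
    (hσ : ∀ Q : EuclideanSpace ℝ (Fin d) ≃ₗᵢ[ℝ] EuclideanSpace ℝ (Fin d),
      MeasurePreserving
        (fun v : Metric.sphere (0 : EuclideanSpace ℝ (Fin d)) 1 =>
          (⟨Q v, by
              rw [mem_sphere_zero_iff_norm, Q.norm_map, ← mem_sphere_zero_iff_norm]
              exact v.2⟩ :
            Metric.sphere (0 : EuclideanSpace ℝ (Fin d)) 1)) σ σ)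
    (a x : EuclideanSpace ℝ (Fin d)) (hx : ‖x‖ = 1) :
    (∫ v, ((d : ℝ) * ⟪a, (v : EuclideanSpace ℝ (Fin d))⟫
        * ⟪(v : EuclideanSpace ℝ (Fin d)), x⟫) ^ 2 ∂σ
      = (3 * d / ((d : ℝ) + 2)) * ⟪a, x⟫ ^ 2
        + ((d : ℝ) / ((d : ℝ) + 2)) * (‖a‖ ^ 2 - ⟪a, x⟫ ^ 2)) ∧
    (∫ v, (d : ℝ) * ⟪a, (v : EuclideanSpace ℝ (Fin d))⟫
        * ⟪(v : EuclideanSpace ℝ (Fin d)), x⟫ ∂σ = ⟪a, x⟫) ∧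
    ((∫ v, ((d : ℝ) * ⟪a, (v : EuclideanSpace ℝ (Fin d))⟫
        * ⟪(v : EuclideanSpace ℝ (Fin d)), x⟫) ^ 2 ∂σ) - ⟪a, x⟫ ^ 2
      = 2 * ⟪a, x⟫ ^ 2 * ((d : ℝ) - 1) / ((d : ℝ) + 2)
        + (‖a‖ ^ 2 - ⟪a, x⟫ ^ 2) * (d : ℝ) / ((d : ℝ) + 2)) ∧
    (2 * ⟪a, x⟫ ^ 2 * ((d : ℝ) - 1) / ((d : ℝ) + 2)
        + (‖a‖ ^ 2 - ⟪a, x⟫ ^ 2) * (d : ℝ) / ((d : ℝ) + 2) ≤ 2 * ‖a‖ ^ 2) := by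
  have hσ' : Inv σ := hσ
  have hd0 : (d : ℝ) ≠ 0 := by positivity
  have hd1 : (1 : ℝ) ≤ (d : ℝ) := by exact_mod_cast hd
  set c : ℝ := ⟪a, x⟫ with hc
  set b : EuclideanSpace ℝ (Fin d) := a - c • x with hb
  have hxx : ⟪x, x⟫ = 1 := by
    rw [real_inner_self_eq_norm_sq, hx]; norm_num
  have hbx : ⟪b, x⟫ = 0 := by
    rw [hb, inner_sub_left, real_inner_smul_left, hxx, hc]; ring
  have hav : ∀ v : EuclideanSpace ℝ (Fin d), ⟪a, v⟫ = c * ⟪x, v⟫ + ⟪b, v⟫ := by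
    intro v
    rw [hb, inner_sub_left, real_inner_smul_left]
    ring
  have hnb : ‖b‖ ^ 2 = ‖a‖ ^ 2 - c ^ 2 := by
    rw [hb, norm_sub_sq_real, real_inner_smul_right, norm_smul, hx, ← hc]
    simp [mul_pow, sq_abs]
    ring
  -- first moment
  have hJ : ∫ v, (d : ℝ) * ⟪a, (v : EuclideanSpace ℝ (Fin d))⟫
      * ⟪(v : EuclideanSpace ℝ (Fin d)), x⟫ ∂σ = c := by
    have int1 : Integrable (fun v : Metric.sphere (0 : EuclideanSpace ℝ (Fin d)) 1 =>
        ((d : ℝ) * c) * ⟪x, (v : EuclideanSpace ℝ (Fin d))⟫ ^ 2) σ :=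
      Integrable.const_mul (by simpa using intg (σ := σ) x x 2 0) _
    have int2 : Integrable (fun v : Metric.sphere (0 : EuclideanSpace ℝ (Fin d)) 1 =>
        (d : ℝ) * (⟪b, (v : EuclideanSpace ℝ (Fin d))⟫
          * ⟪x, (v : EuclideanSpace ℝ (Fin d))⟫ ^ 1)) σ :=
      Integrable.const_mul (by simpa using intg (σ := σ) b x 1 1) _
    have e0 : ∫ v, (d : ℝ) * ⟪a, (v : EuclideanSpace ℝ (Fin d))⟫
        * ⟪(v : EuclideanSpace ℝ (Fin d)), x⟫ ∂σ
        = ∫ v, (((d : ℝ) * c) * ⟪x, (v : EuclideanSpace ℝ (Fin d))⟫ ^ 2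
          + (d : ℝ) * (⟪b, (v : EuclideanSpace ℝ (Fin d))⟫
            * ⟪x, (v : EuclideanSpace ℝ (Fin d))⟫ ^ 1)) ∂σ := by
      apply integral_congr_ae
      filter_upwards with v
      rw [hav, real_inner_comm (v : EuclideanSpace ℝ (Fin d)) x]
      ring
    rw [e0, integral_add int1 int2, integral_const_mul, integral_const_mul,
      c2_val hσ' hd x hx, odd_vanish hσ' b x hbx 1]
    field_simp
    ring
  -- second moment
  have hK : ∫ v, ((d : ℝ) * ⟪a, (v : EuclideanSpace ℝ (Fin d))⟫
      * ⟪(v : EuclideanSpace ℝ (Fin d)), x⟫) ^ 2 ∂σ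
      = (3 * d / ((d : ℝ) + 2)) * c ^ 2
        + ((d : ℝ) / ((d : ℝ) + 2)) * (‖a‖ ^ 2 - c ^ 2) := by
    have int1 : Integrable (fun v : Metric.sphere (0 : EuclideanSpace ℝ (Fin d)) 1 =>
        ((d : ℝ) ^ 2 * c ^ 2) * ⟪x, (v : EuclideanSpace ℝ (Fin d))⟫ ^ 4) σ :=
      Integrable.const_mul (by simpa using intg (σ := σ) x x 4 0) _
    have int2 : Integrable (fun v : Metric.sphere (0 : EuclideanSpace ℝ (Fin d)) 1 =>
        (2 * (d : ℝ) ^ 2 * c) * (⟪b, (v : EuclideanSpace ℝ (Fin d))⟫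
          * ⟪x, (v : EuclideanSpace ℝ (Fin d))⟫ ^ 3)) σ :=
      Integrable.const_mul (by simpa using intg (σ := σ) b x 1 3) _
    have int3 : Integrable (fun v : Metric.sphere (0 : EuclideanSpace ℝ (Fin d)) 1 =>
        (d : ℝ) ^ 2 * (⟪b, (v : EuclideanSpace ℝ (Fin d))⟫ ^ 2
          * ⟪x, (v : EuclideanSpace ℝ (Fin d))⟫ ^ 2)) σ :=
      Integrable.const_mul (intg (σ := σ) b x 2 2) _
    have e0 : ∫ v, ((d : ℝ) * ⟪a, (v : EuclideanSpace ℝ (Fin d))⟫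
        * ⟪(v : EuclideanSpace ℝ (Fin d)), x⟫) ^ 2 ∂σ
        = ∫ v, (((d : ℝ) ^ 2 * c ^ 2) * ⟪x, (v : EuclideanSpace ℝ (Fin d))⟫ ^ 4
          + ((2 * (d : ℝ) ^ 2 * c) * (⟪b, (v : EuclideanSpace ℝ (Fin d))⟫
            * ⟪x, (v : EuclideanSpace ℝ (Fin d))⟫ ^ 3)
          + (d : ℝ) ^ 2 * (⟪b, (v : EuclideanSpace ℝ (Fin d))⟫ ^ 2
            * ⟪x, (v : EuclideanSpace ℝ (Fin d))⟫ ^ 2))) ∂σ := by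
      apply integral_congr_ae
      filter_upwards with v
      rw [hav, real_inner_comm (v : EuclideanSpace ℝ (Fin d)) x]
      ring
    have int23 : Integrable (fun v : Metric.sphere (0 : EuclideanSpace ℝ (Fin d)) 1 =>
        (2 * (d : ℝ) ^ 2 * c) * (⟪b, (v : EuclideanSpace ℝ (Fin d))⟫
          * ⟪x, (v : EuclideanSpace ℝ (Fin d))⟫ ^ 3)
        + (d : ℝ) ^ 2 * (⟪b, (v : EuclideanSpace ℝ (Fin d))⟫ ^ 2
          * ⟪x, (v : EuclideanSpace ℝ (Fin d))⟫ ^ 2)) σ := int2.add int3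
    rw [e0, integral_add int1 int23, integral_add int2 int3,
      integral_const_mul, integral_const_mul, integral_const_mul,
      c4_val hσ' hd x hx, odd_vanish hσ' b x hbx 3, m22_gen hσ' hd x b hx hbx, hnb]
    field_simp
    ring
  refine ⟨hK, hJ, ?_, ?_⟩
  · rw [hK]
    field_simp
    ring
  · have hca : c ^ 2 ≤ ‖a‖ ^ 2 := by
      have h := abs_real_inner_le_norm a x
      rw [hx, mul_one] at h
      nlinarith [abs_nonneg (⟪a, x⟫ : ℝ), sq_abs (⟪a, x⟫ : ℝ)]
    rw [← add_div, div_le_iff₀ (by positivity : (0:ℝ) < (d : ℝ) + 2)]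
    nlinarith [hca, sq_nonneg c, hd1]
end

section
/- Let F be a finite field of characteristic 2, let tr : F → 𝔽₂ denote the field trace onto the prime field, and consider the 𝔽₂-vector space V := F × 𝔽₂ with the bilinear form (x, α)·(y, β) := tr(xy) + αβ. For s ∈ F define the 𝔽₂-linear map L_s : V → V by L_s(x, α) := (s²x + s·tr(sx) + αs, tr(sx)). Then: (i) for every s ∈ F and (x, α) ∈ V, (x, α)·L_s(x, α) = 0; and (ii) for every s ∈ F and (x, α), (y, β) ∈ V, (x, α)·L_s(y, β) = L_s(x, α)·(y, β). -/
set_option linter.unusedSectionVars false in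
lemma aux_tr_sq (F : Type*) [Field F] [Fintype F] [CharP F 2] [Algebra (ZMod 2) F]
    (z : F) : Algebra.trace (ZMod 2) F (z ^ 2) = Algebra.trace (ZMod 2) F z := by
  let b := Module.finBasis (ZMod 2) F
  rw [Algebra.trace_eq_matrix_trace b, Algebra.trace_eq_matrix_trace b, map_pow]
  have h := ZMod.trace_pow_card (p := 2) (Algebra.leftMulMatrix b z)
  rw [h]
  generalize Matrix.trace (Algebra.leftMulMatrix b z) = a
  revert a; decide

/-- Let `F` be a finite field of characteristic 2, `tr : F → 𝔽₂` the
field trace, `V := F × 𝔽₂` with bilinear form `(x,α)·(y,β) = tr(xy) + αβ`, and for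
`s ∈ F` let `L_s(x,α) := (s²x + tr(sx)·s + α·s, tr(sx))`. Then (i) every `v ∈ V`
satisfies `v · L_s v = 0`, and (ii) `L_s` is self-adjoint for the bilinear form:
`v · L_s w = L_s v · w`. -/
theorem stmt_15 (F : Type*) [Field F] [Fintype F] [CharP F 2] [Algebra (ZMod 2) F]
    (tr : F → ZMod 2) (htr : ∀ z, tr z = Algebra.trace (ZMod 2) F z)
    (B : (F × ZMod 2) → (F × ZMod 2) → ZMod 2)
    (hB : ∀ v w : F × ZMod 2, B v w = tr (v.1 * w.1) + v.2 * w.2)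
    (Ls : F → (F × ZMod 2) → (F × ZMod 2))
    (hLs : ∀ (s : F) (v : F × ZMod 2),
      Ls s v = (s ^ 2 * v.1 + tr (s * v.1) • s + v.2 • s, tr (s * v.1))) :
    (∀ (s : F) (v : F × ZMod 2), B v (Ls s v) = 0) ∧
    (∀ (s : F) (v w : F × ZMod 2), B v (Ls s w) = B (Ls s v) w) := by
  have hadd : ∀ a b : F, tr (a + b) = tr a + tr b := by
    intro a b; simp [htr, map_add]
  have hsmul : ∀ (c : ZMod 2) (a : F), tr (c • a) = c * tr a := by
    intro c a; simp [htr, map_smul, smul_eq_mul]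
  have hsq : ∀ z : F, tr (z ^ 2) = tr z := by
    intro z; rw [htr, htr, aux_tr_sq]
  have hz2 : ∀ a : ZMod 2, a * a = a := by decide
  have h2 : ∀ a : ZMod 2, a + a = 0 := by decide
  constructor
  · intro s v
    obtain ⟨x, α⟩ := v
    rw [hB, hLs]
    simp only
    have e1 : x * (s ^ 2 * x + tr (s * x) • s + α • s)
        = (s * x) ^ 2 + tr (s * x) • (s * x) + α • (s * x) := by
      simp only [Algebra.smul_def]; ring
    rw [e1, hadd, hadd, hsq, hsmul, hsmul, hz2]
    ring_nf
    have : (2 : ZMod 2) = 0 := rfl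
    rw [this]; ring
  · intro s v w
    obtain ⟨x, α⟩ := v
    obtain ⟨y, β⟩ := w
    rw [hB, hB, hLs, hLs]
    simp only
    have e1 : x * (s ^ 2 * y + tr (s * y) • s + β • s)
        = s ^ 2 * (x * y) + tr (s * y) • (s * x) + β • (s * x) := by
      simp only [Algebra.smul_def]; ring
    have e2 : (s ^ 2 * x + tr (s * x) • s + α • s) * y
        = s ^ 2 * (x * y) + tr (s * x) • (s * y) + α • (s * y) := by
      simp only [Algebra.smul_def]; ring
    rw [e1, e2, hadd, hadd, hadd, hadd, hsmul, hsmul, hsmul, hsmul]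
    ring
end

section
/- Let F be a finite field of characteristic 2 of odd degree over its prime field (equivalently, tr(1) = 1, e.g. F = 𝔽_{2^{k−1}} with k even), let tr : F → 𝔽₂ denote the field trace, and consider the 𝔽₂-vector space V := F × 𝔽₂. For s ∈ F define L_s : V → V by L_s(x, α) := (s²x + s·tr(sx) + αs, tr(sx)). Then for every r, s ∈ F with r ≠ s, the only (x, α) ∈ V with L_r(x, α) = L_s(x, α) is (x, α) = (0, 0); that is, L_r + L_s is an injective (hence bijective) 𝔽₂-linear map on V. -/
/-- Let `F` be a finite field of characteristic 2 whose field trace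
`tr : F → 𝔽₂` satisfies `tr(1) = 1` (equivalently, `F` has odd degree over `𝔽₂`),
and for `s ∈ F` let `L_s : F × 𝔽₂ → F × 𝔽₂` be given by
`L_s(x,α) := (s²x + tr(sx)·s + α·s, tr(sx))`. Then for `r ≠ s`, the only `v` with
`L_r v = L_s v` is `v = 0`; i.e. `L_r + L_s` is injective. -/
theorem stmt_16 (F : Type*) [Field F] [Fintype F] [CharP F 2] [Algebra (ZMod 2) F]
    (tr : F → ZMod 2) (htr : ∀ z, tr z = Algebra.trace (ZMod 2) F z)
    (htr1 : tr 1 = 1)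
    (Ls : F → (F × ZMod 2) → (F × ZMod 2))
    (hLs : ∀ (s : F) (v : F × ZMod 2),
      Ls s v = (s ^ 2 * v.1 + tr (s * v.1) • s + v.2 • s, tr (s * v.1))) :
    ∀ r s : F, r ≠ s → ∀ v : F × ZMod 2, Ls r v = Ls s v → v = 0 := by
  intro r s hrs v h
  obtain ⟨x, α⟩ := v
  rw [hLs, hLs] at h
  simp only [Prod.mk.injEq] at h
  obtain ⟨h1, h2⟩ := h
  have h2f : (2 : F) = 0 := by
    have := CharP.cast_eq_zero F 2
    exact_mod_cast this
  have htradd : ∀ a b : F, tr (a + b) = tr a + tr b := by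
    intro a b
    simp [htr, map_add]
  have htrsmul : ∀ (c : ZMod 2) (a : F), tr (c • a) = c * tr a := by
    intro c a
    rw [htr, htr, map_smul, smul_eq_mul]
  set t := tr (s * x) with ht
  rw [h2] at h1
  -- convert smul to algebraMap
  have hd : r + s ≠ 0 := by
    intro hh
    apply hrs
    have : r = r + (s + s) := by rw [show s + s = 2 * s by ring, h2f]; ring
    rw [this, ← add_assoc, hh, zero_add]
  set a : F := algebraMap (ZMod 2) F t with ha
  set b : F := algebraMap (ZMod 2) F α with hb
  have hsm : ∀ (c : ZMod 2) (y : F), c • y = algebraMap (ZMod 2) F c * y :=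
    fun c y => Algebra.smul_def c y
  rw [hsm, hsm, hsm, hsm, ← ha, ← hb] at h1
  have key : (r + s) * ((r + s) * x) = (a + b) * (r + s) := by
    linear_combination h1 + (r * s * x + s ^ 2 * x - a * r - b * r) * h2f
  have key2 : (r + s) * x = a + b :=
    mul_left_cancel₀ hd (key.trans (mul_comm (a + b) (r + s)))
  have htr0 : tr ((r + s) * x) = 0 := by
    rw [add_mul, htradd, h2, ← ht, CharTwo.add_self_eq_zero]
  have hab : t + α = 0 := by
    have h3 : tr (a + b) = t + α := by
      rw [htradd, ha, hb]
      have h4 : ∀ c : ZMod 2, tr (algebraMap (ZMod 2) F c) = c := by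
        intro c
        rw [Algebra.algebraMap_eq_smul_one, htrsmul, htr1, mul_one]
      rw [h4, h4]
    rw [← h3, ← key2, htr0]
  have hab0 : a + b = 0 := by
    rw [ha, hb, ← map_add, hab, map_zero]
  have hx : x = 0 := by
    have := key2.trans hab0
    rcases mul_eq_zero.mp this with h | h
    · exact absurd h hd
    · exact h
  have ht0 : t = 0 := by rw [ht, hx, mul_zero, htr]; simp
  have hα : α = 0 := by
    have := hab
    rw [ht0, zero_add] at this
    exact this
  simp [hx, hα, Prod.ext_iff]
end

section
/- Let m, s ∈ ℕ, let ε > δ ≥ 0, and let v, μ̂ ∈ ℝ^m. Suppose there exists w ∈ ℝ^m with at most s nonzero entries such that ‖v − w‖_∞ ≤ δ, and suppose ‖μ̂ − v‖_∞ < (ε − δ)/2. Then: (1) every index i with |v_i| ≥ ε satisfies |μ̂_i| > (ε + δ)/2; (2) every index i with |v_i| ≤ δ satisfies |μ̂_i| < (ε + δ)/2; and consequently (3) every set S ⊆ [m] of s indices of largest-magnitude entries of μ̂ (i.e., |S| = s and |μ̂_i| ≥ |μ̂_j| for every i ∈ S and j ∉ S) contains the set {i ∈ [m] : |v_i| ≥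 ε}, which is the support of the ε-hard threshold h_ε(v). -/
/-- If `v` is entrywise `δ`-close to an `s`-sparse vector and `μ̂` is
entrywise `(ε−δ)/2`-close to `v`, then (1) every entry of `v` of magnitude at least `ε`
yields an entry of `μ̂` of magnitude more than `(ε+δ)/2`; (2) every entry of `v` of
magnitude at most `δ` yields an entry of `μ̂` of magnitude less than `(ε+δ)/2`; and
(3) any set `S` of `s` indices of largest-magnitude entries of `μ̂` contains the
support `{i : |v_i| ≥ ε}` of the `ε`-hard threshold of `v`. -/
theorem stmt_17 (m s : ℕ) (ε δ : ℝ) (hδ : 0 ≤ δ) (hεδ : δ < ε)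
    (v muhat : Fin m → ℝ)
    (hsparse : ∃ w : Fin m → ℝ,
      (Finset.univ.filter fun i => w i ≠ 0).card ≤ s ∧ ∀ i, |v i - w i| ≤ δ)
    (hclose : ∀ i, |muhat i - v i| < (ε - δ) / 2) :
    (∀ i, ε ≤ |v i| → (ε + δ) / 2 < |muhat i|) ∧
    (∀ i, |v i| ≤ δ → |muhat i| < (ε + δ) / 2) ∧
    (∀ S : Finset (Fin m), S.card = s →
      (∀ i ∈ S, ∀ j ∉ S, |muhat j| ≤ |muhat i|) →
      ∀ i, ε ≤ |v i| → i ∈ S) := by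
  obtain ⟨w, hwcard, hwδ⟩ := hsparse
  have h1 : ∀ i, ε ≤ |v i| → (ε + δ) / 2 < |muhat i| := by
    intro i hi
    have h := hclose i
    have : |v i| - |muhat i| ≤ |muhat i - v i| := by
      have := abs_sub_abs_le_abs_sub (v i) (muhat i)
      rwa [abs_sub_comm] at this
    linarith
  have h2 : ∀ i, |v i| ≤ δ → |muhat i| < (ε + δ) / 2 := by
    intro i hi
    have h := hclose i
    have : |muhat i| - |v i| ≤ |muhat i - v i| := abs_sub_abs_le_abs_sub _ _
    linarith
  refine ⟨h1, h2, ?_⟩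
  intro S hScard hSmax i hi
  by_contra hiS
  -- i is in the support of w
  have hwi : w i ≠ 0 := by
    intro h0
    have := hwδ i
    rw [h0, sub_zero] at this
    linarith
  set T := Finset.univ.filter fun j => w j ≠ 0 with hT
  have hiT : i ∈ T := by simp [hT, hwi]
  -- there is j ∈ S \ T
  have : ∃ j ∈ S, j ∉ T := by
    by_contra h
    push_neg at h
    have hST : S ⊆ T := h
    have : S.card < T.card := by
      refine Finset.card_lt_card ⟨hST, fun hTS => hiS (hTS hiT)⟩
    omega
  obtain ⟨j, hjS, hjT⟩ := this
  have hwj : w j = 0 := by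
    by_contra h
    exact hjT (by simp [hT, h])
  have hvj : |v j| ≤ δ := by
    have := hwδ j
    rwa [hwj, sub_zero] at this
  have := hSmax j hjS i hiS
  have := h1 i hi
  have := h2 j hvj
  linarith
end
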